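/- arXiv:2211.07154 — 2 statements merged into one kernel-verified Lean document; each statement's English description precedes it below -/
import Mathlib

section
/- Let G be a finite graph on n vertices, W ⊆ V(G), and (X, (T, bag)) a torso tree decomposition in G of width k that covers W. Let d : V(G) → {1, …, n} be a weight function, let t be a node of T, and let S be a (bag(t), W)-separator witnessing that bag(t) is not d-linked into W (i.e., |S| < |bag(t)|, or |S| = |bag(t)| and d(S) < d(bag(t))). Then there exists a torso tree decomposition (X', (T', bag')) in G that covers W, has width at most k, has at most |V(T)| nodes, and satisfies φ_d(X') < φ_d(X), where φ_d(Z) = |Z|·n·(k+1) + d(Z). -/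
open SimpleGraph

variable {V ι : Type*}

/-- The torso of `G` on a vertex set `X`: vertices `u ≠ v` of `X` are adjacent iff there is a
`u`–`v` walk in `G` all of whose internal vertices lie outside `X`. -/
def torsoGraph (G : SimpleGraph V) (X : Set V) : SimpleGraph V where
  Adj u v := u ≠ v ∧ u ∈ X ∧ v ∈ X ∧
    ∃ p : G.Walk u v, ∀ w ∈ p.support, w = u ∨ w = v ∨ w ∉ X
  symm := by
    constructor
    rintro u v ⟨hne, hu, hv, p, hp⟩
    refine ⟨hne.symm, hv, hu, p.reverse, ?_⟩
    intro w hw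
    rw [SimpleGraph.Walk.support_reverse, List.mem_reverse] at hw
    rcases hp w hw with h | h | h
    · exact Or.inr (Or.inl h)
    · exact Or.inl h
    · exact Or.inr (Or.inr h)
  loopless := ⟨fun _ h => h.1 rfl⟩

/-- `(T, bag)` is a tree decomposition of `G`. -/
structure IsTreeDecomp (G : SimpleGraph V) (T : SimpleGraph ι) (bag : ι → Set V) : Prop where
  tree : T.IsTree
  mem_bag : ∀ v : V, ∃ t, v ∈ bag t
  edge_bag : ∀ ⦃u v : V⦄, G.Adj u v → ∃ t, u ∈ bag t ∧ v ∈ bag t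
  conn : ∀ v : V, (T.induce {t | v ∈ bag t}).Connected

/-- `(X, (T, bag))` is a torso tree decomposition in `G`, i.e. `(T, bag)` is a tree
decomposition of `torsoGraph G X`. -/
structure IsTorsoTreeDecomp (G : SimpleGraph V) (X : Set V)
    (T : SimpleGraph ι) (bag : ι → Set V) : Prop where
  tree : T.IsTree
  bag_subset : ∀ t, bag t ⊆ X
  mem_bag : ∀ v ∈ X, ∃ t, v ∈ bag t
  edge_bag : ∀ ⦃u v : V⦄, (torsoGraph G X).Adj u v → ∃ t, u ∈ bag t ∧ v ∈ bag t
  conn : ∀ v ∈ X, (T.induce {t | v ∈ bag t}).Connected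

/-- `G` has treewidth at most `k`. -/
def HasTreewidthAtMost (G : SimpleGraph V) (k : ℕ) : Prop :=
  ∃ (n : ℕ) (T : SimpleGraph (Fin n)) (bag : Fin n → Set V),
    IsTreeDecomp G T bag ∧ ∀ t, (bag t).ncard ≤ k + 1

/-- `S` is an `(X, Y)`-separator in `G`: every walk from `X` to `Y` meets `S`. -/
def IsSep (G : SimpleGraph V) (X Y S : Set V) : Prop :=
  ∀ ⦃x y : V⦄, x ∈ X → y ∈ Y → ∀ p : G.Walk x y, ∃ s ∈ S, s ∈ p.support

/-- The maximum number of vertex-disjoint `X`–`Y` paths; by Menger's theorem this equals the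
minimum size of an `(X, Y)`-separator, which is how we define it. -/
noncomputable def flowG (G : SimpleGraph V) (X Y : Set V) : ℕ :=
  sInf (Set.ncard '' {S : Set V | IsSep G X Y S})

/-- `X` is linked into `Y`. -/
def LinkedInto (G : SimpleGraph V) (X Y : Set V) : Prop :=
  flowG G X Y = X.ncard

/-- `X` is strictly linked into `Y`. -/
def StrictlyLinkedInto (G : SimpleGraph V) (X Y : Set V) : Prop :=
  LinkedInto G X Y ∧
    ∀ S : Set V, IsSep G X Y S → S.ncard = X.ncard → S = X ∨ S = Y

/-- `R_G(X, S)`: the set of vertices of `G \ S` reachable from `X \ S`. -/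
def reachG (G : SimpleGraph V) (X S : Set V) : Set V :=
  {v | ∃ x ∈ X, x ∉ S ∧ ∃ p : G.Walk x v, ∀ w ∈ p.support, w ∉ S}

/-- `S` is a minimal `(X, Y)`-separator. -/
def IsMinimalSep (G : SimpleGraph V) (X Y S : Set V) : Prop :=
  IsSep G X Y S ∧ ∀ S' : Set V, S' ⊂ S → ¬ IsSep G X Y S'

/-- `S` is an important `(A, B)`-separator. -/
def IsImportantSep (G : SimpleGraph V) (A B S : Set V) : Prop :=
  IsMinimalSep G A B S ∧
    ¬ ∃ S' : Set V, IsSep G A B S' ∧ S'.ncard ≤ S.ncard ∧ reachG G A S ⊂ reachG G A S'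

/-- The important `(A, B)`-separator `S'` dominates the `(A, B)`-separator `S`. -/
def DominatesSep (G : SimpleGraph V) (A B S S' : Set V) : Prop :=
  IsImportantSep G A B S' ∧ S'.ncard ≤ S.ncard ∧ reachG G A S ⊆ reachG G A S'

/-- `(A, S, B)` is a separation of `G`. -/
structure IsSeparation (G : SimpleGraph V) (A S B : Set V) : Prop where
  disjoint_AS : Disjoint A S
  disjoint_AB : Disjoint A B
  disjoint_SB : Disjoint S B
  union_eq : A ∪ S ∪ B = Set.univ
  no_adj : ∀ ⦃a b : V⦄, a ∈ A → b ∈ B → ¬ G.Adj a b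

open Classical in
/-- The flow potential `flp_G(X, Y)`. -/
noncomputable def flpG (G : SimpleGraph V) (X Y : Set V) : ℕ :=
  if X = Set.univ then X.ncard
  else sInf {n : ℕ | ∃ A S B : Set V, IsSeparation G A S B ∧
    X ⊆ A ∪ S ∧ Y ⊆ B ∪ S ∧ B.Nonempty ∧ S.ncard = n}

/-- The graph consisting of a clique on `S` (and no other edges). -/
def cliqueOn (S : Set V) : SimpleGraph V where
  Adj u v := u ≠ v ∧ u ∈ S ∧ v ∈ S
  symm := ⟨fun _ _ ⟨h, hu, hv⟩ => ⟨h.symm, hv, hu⟩⟩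
  loopless := ⟨fun _ h => h.1 rfl⟩

/-- `G ⊗ S`: the graph obtained from `G` by making `S` a clique. -/
def addCliqueG (G : SimpleGraph V) (S : Set V) : SimpleGraph V := G ⊔ cliqueOn S

/-- `(G, Ws, k)` is an instance of Partitioned Subset Treewidth: `Ws` is a finite nonempty
family of terminal cliques, `k ≥ 1`, each terminal clique being a clique of `G` of size at
most `k + 1`. -/
def IsPSTWInstance (G : SimpleGraph V) (Ws : Set (Set V)) (k : ℕ) : Prop :=
  Ws.Finite ∧ Ws.Nonempty ∧ 1 ≤ k ∧ ∀ W ∈ Ws, G.IsClique W ∧ W.ncard ≤ k + 1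

/-- `(X, (T, bag))` is a solution of the instance `(G, Ws, k)`. -/
def IsSolutionTD (G : SimpleGraph V) (Ws : Set (Set V)) (k : ℕ)
    (X : Set V) (T : SimpleGraph ι) (bag : ι → Set V) : Prop :=
  IsTorsoTreeDecomp G X T bag ∧ ⋃₀ Ws ⊆ X ∧ ∀ t, (bag t).ncard ≤ k + 1

/-- The instance `(G, Ws, k)` is a yes-instance. -/
def IsYesInstance (G : SimpleGraph V) (Ws : Set (Set V)) (k : ℕ) : Prop :=
  ∃ (κ : Type) (T : SimpleGraph κ) (bag : κ → Set V) (X : Set V),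
    IsSolutionTD G Ws k X T bag

/-- `W̄_I(W)`: the union of the terminal cliques other than `W`. -/
def otherUnion (Ws : Set (Set V)) (W : Set V) : Set V := ⋃₀ (Ws \ {W})

/-- `flp_I(W) = flp_G(W, W̄_I(W))`. -/
noncomputable def flpInst (G : SimpleGraph V) (Ws : Set (Set V)) (W : Set V) : ℕ :=
  flpG G W (otherUnion Ws W)

/-- `(A, S, B)` is a safe separation of the instance `(G, Ws, k)`. -/
def IsSafeSeparation (G : SimpleGraph V) (Ws : Set (Set V)) (A S B : Set V) : Prop :=
  IsSeparation G A S B ∧ A.Nonempty ∧ B.Nonempty ∧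
    ∃ Wa ∈ Ws, ∃ Wb ∈ Ws,
      LinkedInto G S ((A ∪ S) ∩ Wa) ∧ LinkedInto G S ((B ∪ S) ∩ Wb)

/-- `Ws ◁ (A, S)`: remove the terminal cliques not meeting `A`, then insert `S` if no superset
of `S` is present. -/
def restrictCliques (Ws : Set (Set V)) (A S : Set V) : Set (Set V) :=
  {W ∈ Ws | (W ∩ A).Nonempty} ∪
    {W | W = S ∧ ¬ ∃ W' ∈ Ws, (W' ∩ A).Nonempty ∧ S ⊆ W'}

/-- `G ◁ (A, S) = G[A ∪ S] ⊗ S`, as a graph on the vertex set `A ∪ S`. -/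
def restrictGraph (G : SimpleGraph V) (A S : Set V) : SimpleGraph ↥(A ∪ S) :=
  addCliqueG (G.induce (A ∪ S)) (Subtype.val ⁻¹' S)

/-- The terminal cliques of `I ◁ (A, S)`, viewed as subsets of the vertex set `A ∪ S`. -/
def restrictSets (Ws : Set (Set V)) (A S : Set V) : Set (Set ↥(A ∪ S)) :=
  (fun W => Subtype.val ⁻¹' W) '' restrictCliques Ws A S

/-- The terminal cliques of `I × (Wi, Wj)`. -/
def mergeCliques (Ws : Set (Set V)) (Wi Wj : Set V) : Set (Set V) :=
  insert (Wi ∪ Wj) (Ws \ {Wi, Wj})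

/-- The terminal cliques of `I + (W, ·)`, replacing `W` by `W'`. -/
def replaceClique (Ws : Set (Set V)) (W W' : Set V) : Set (Set V) :=
  insert W' (Ws \ {W})

/-- The instance `(G, Ws, k)` is maximally merged. -/
def MaximallyMerged (G : SimpleGraph V) (Ws : Set (Set V)) (k : ℕ) : Prop :=
  ∀ Wi ∈ Ws, ∀ Wj ∈ Ws, Wi ≠ Wj → (Wi ∪ Wj).ncard ≤ k + 1 →
    ¬ IsYesInstance (addCliqueG G (Wi ∪ Wj)) (mergeCliques Ws Wi Wj) k

/-- `Wi` is a potential forget-clique of the instance `(G, Ws, k)`. -/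
def IsPotentialForgetClique (G : SimpleGraph V) (Ws : Set (Set V)) (k : ℕ)
    (Wi : Set V) : Prop :=
  ∃ (κ : Type) (T : SimpleGraph κ) (bag : κ → Set V) (X : Set V),
    IsSolutionTD G Ws k X T bag ∧
    ∃ l p : κ, T.Adj l p ∧ (∀ q, T.Adj l q → q = p) ∧
      Wi ⊆ bag l ∧ ∃ w ∈ Wi \ otherUnion Ws Wi, bag p = bag l \ {w}

/-- The disjoint union of two trees together with one extra edge between `a` and `b`. -/
def glueTrees {ι₁ ι₂ : Type*} (T₁ : SimpleGraph ι₁) (T₂ : SimpleGraph ι₂)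
    (a : ι₁) (b : ι₂) : SimpleGraph (ι₁ ⊕ ι₂) where
  Adj x y :=
    (∃ u v, T₁.Adj u v ∧ x = Sum.inl u ∧ y = Sum.inl v) ∨
    (∃ u v, T₂.Adj u v ∧ x = Sum.inr u ∧ y = Sum.inr v) ∨
    (x = Sum.inl a ∧ y = Sum.inr b) ∨
    (x = Sum.inr b ∧ y = Sum.inl a)
  symm := by
    constructor
    rintro x y (⟨u, v, h, rfl, rfl⟩ | ⟨u, v, h, rfl, rfl⟩ | ⟨rfl, rfl⟩ | ⟨rfl, rfl⟩)
    · exact Or.inl ⟨v, u, h.symm, rfl, rfl⟩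
    · exact Or.inr (Or.inl ⟨v, u, h.symm, rfl, rfl⟩)
    · exact Or.inr (Or.inr (Or.inr ⟨rfl, rfl⟩))
    · exact Or.inr (Or.inr (Or.inl ⟨rfl, rfl⟩))
  loopless := by
    constructor
    rintro x (⟨u, v, h, rfl, he⟩ | ⟨u, v, h, rfl, he⟩ | ⟨rfl, he⟩ | ⟨rfl, he⟩)
    · exact h.ne (Sum.inl.inj he)
    · exact h.ne (Sum.inr.inj he)
    · exact Sum.inl_ne_inr he
    · exact Sum.inr_ne_inl he

/-- The sum of the weights `d` over the set `S`. -/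
noncomputable def setSum [Finite V] (d : V → ℕ) (S : Set V) : ℕ :=
  ∑ v ∈ S.toFinite.toFinset, d v

section MengerDev

open SimpleGraph Walk

variable {G : SimpleGraph V}

/-- Split a walk at the first vertex belonging to `S`. -/
lemma exists_firstHit {a b : V} (p : G.Walk a b) (S : Set V)
    (h : ∃ w ∈ p.support, w ∈ S) :
    ∃ (c : V) (q₁ : G.Walk a c) (q₂ : G.Walk c b),
      c ∈ S ∧
      (∀ w, w ∈ p.support ↔ (w ∈ q₁.support ∨ w ∈ q₂.support)) ∧
      (∀ w ∈ q₁.support, w ∈ S → w = c) ∧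
      (∀ w ∈ q₁.support, ∃ r : G.Walk a w, (∀ u ∈ r.support, u ∈ q₁.support) ∧
        (∀ u ∈ r.support, u ∈ S → u = w)) ∧
      q₁.length + q₂.length = p.length := by
  induction p with
  | nil =>
    obtain ⟨w, hw, hwS⟩ := h
    simp only [support_nil, List.mem_singleton] at hw
    subst hw
    refine ⟨_, Walk.nil, Walk.nil, hwS, by simp, ?_, ?_, rfl⟩
    · intro w hw _
      simpa using hw
    · intro w hw
      simp only [support_nil, List.mem_singleton] at hw
      subst hw
      exact ⟨Walk.nil, by simp, by intro u hu _; simpa using hu⟩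
  | @cons u v b h' p' ih =>
    by_cases hu : u ∈ S
    · refine ⟨u, Walk.nil, Walk.cons h' p', hu, by simp, ?_, ?_, by simp⟩
      · intro w hw _; simpa using hw
      · intro w hw
        simp only [support_nil, List.mem_singleton] at hw
        subst hw
        exact ⟨Walk.nil, by simp, by intro z hz _; simpa using hz⟩
    · have h2 : ∃ w ∈ p'.support, w ∈ S := by
        obtain ⟨w, hw, hwS⟩ := h
        rw [support_cons, List.mem_cons] at hw
        rcases hw with rfl | hw
        · exact absurd hwS hu
        · exact ⟨w, hw, hwS⟩
      obtain ⟨c, q₁, q₂, hc, hiff, hone, hreach, hlen⟩ := ih h2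
      refine ⟨c, Walk.cons h' q₁, q₂, hc, ?_, ?_, ?_, by simp [hlen]; omega⟩
      · intro w
        rw [support_cons, support_cons, List.mem_cons, List.mem_cons, hiff w]
        tauto
      · intro w hw hwS
        rw [support_cons, List.mem_cons] at hw
        rcases hw with rfl | hw
        · exact absurd hwS hu
        · exact hone w hw hwS
      · intro w hw
        rw [support_cons, List.mem_cons] at hw
        rcases hw with rfl | hw
        · exact ⟨Walk.nil, by simp, by intro z hz _; simpa using hz⟩
        · obtain ⟨r, hr1, hr2⟩ := hreach w hw
          refine ⟨Walk.cons h' r, ?_, ?_⟩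
          · intro z hz
            rw [support_cons, List.mem_cons] at hz ⊢
            rcases hz with rfl | hz
            · exact Or.inl rfl
            · exact Or.inr (hr1 z hz)
          · intro z hz hzS
            rw [support_cons, List.mem_cons] at hz
            rcases hz with rfl | hz
            · exact absurd hzS hu
            · exact hr2 z hz hzS

lemma reachG_closed {Z S : Set V} {v w : V} (hv : v ∈ reachG G Z S)
    (r : G.Walk v w) (hr : ∀ u ∈ r.support, u ∉ S) : w ∈ reachG G Z S := by
  obtain ⟨x, hx, hxS, p, hp⟩ := hv
  refine ⟨x, hx, hxS, p.append r, ?_⟩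
  intro u hu
  rw [Walk.mem_support_append_iff] at hu
  rcases hu with h | h
  exacts [hp u h, hr u h]

lemma not_mem_S_of_mem_reachG {Z S : Set V} {v : V} (hv : v ∈ reachG G Z S) : v ∉ S := by
  obtain ⟨x, hx, hxS, p, hp⟩ := hv
  exact hp v p.end_mem_support

lemma eq_of_walk_edgeSet_empty (hE : G.edgeSet = ∅) {x y : V} (p : G.Walk x y) : x = y := by
  cases p with
  | nil => rfl
  | cons h _ =>
    exact absurd (G.mem_edgeSet.2 h) (by simp [hE])

/-- A system of `k` pairwise vertex-disjoint walks from `A` to `B`. -/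
structure WFan (G : SimpleGraph V) (A B : Set V) (k : ℕ) where
  fi : Fin k → V
  la : Fin k → V
  walk : ∀ i, G.Walk (fi i) (la i)
  fi_mem : ∀ i, fi i ∈ A
  la_mem : ∀ i, la i ∈ B
  disj : ∀ i j, i ≠ j → ∀ w, w ∈ (walk i).support → w ∉ (walk j).support

def WFan.mono {G H : SimpleGraph V} (hGH : G ≤ H) {A B : Set V} {k : ℕ}
    (F : WFan G A B k) : WFan H A B k where
  fi := F.fi
  la := F.la
  walk := fun i => (F.walk i).transfer H
    (fun e he => edgeSet_mono hGH (Walk.edges_subset_edgeSet _ he))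
  fi_mem := F.fi_mem
  la_mem := F.la_mem
  disj := by
    intro i j hij w hw
    rw [Walk.support_transfer] at hw ⊢
    exact F.disj i j hij w hw

/-- Chaining lemma: the union of the subtrees of the bags along a walk is connected. -/
lemma chain_connected {T : SimpleGraph ι} {bag : ι → Set V} {X : Set V}
    (hconn : ∀ v ∈ X, (T.induce {t | v ∈ bag t}).Connected)
    (hmem : ∀ v ∈ X, ∃ t, v ∈ bag t)
    (hedge : ∀ ⦃u v : V⦄, (torsoGraph G X).Adj u v → ∃ t, u ∈ bag t ∧ v ∈ bag t)
    (hbag : ∀ t, bag t ⊆ X) :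
    ∀ (n : ℕ) {a b : V} (q : G.Walk a b), q.length ≤ n → a ∈ X →
      (T.induce {u | ∃ x ∈ q.support, x ∈ bag u}).Connected := by
  have base : ∀ {a b : V} (q : G.Walk a b), a ∈ X →
      ¬(∃ w ∈ q.support, w ∈ X \ {a}) →
      (T.induce {u | ∃ x ∈ q.support, x ∈ bag u}).Connected := by
    intro a b q ha hno
    have hset : {u | ∃ x ∈ q.support, x ∈ bag u} = {t | a ∈ bag t} := by
      ext u
      constructor
      · rintro ⟨x, hx, hxb⟩
        have hxX : x ∈ X := hbag u hxb
        have hxa : x = a := by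
          by_contra hne
          exact hno ⟨x, hx, hxX, hne⟩
        subst hxa
        exact hxb
      · intro hu
        exact ⟨a, q.start_mem_support, hu⟩
    rw [hset]
    exact hconn a ha
  intro n
  induction n with
  | zero =>
    intro a b q hq ha
    cases q with
    | nil => exact base _ ha (by rintro ⟨w, hw, _, hne⟩; simp at hw; exact hne hw)
    | cons h p => simp [Walk.length_cons] at hq
  | succ n ih =>
    intro a b q hq ha
    by_cases hx : ∃ w ∈ q.support, w ∈ X \ {a}
    · obtain ⟨c, q₁, q₂, hc, hiff, hone, _, hlen⟩ := exists_firstHit q _ hx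
      have hca : c ≠ a := hc.2
      have hq1pos : q₁.length ≠ 0 := fun h0 => hca (Walk.eq_of_length_eq_zero h0).symm
      have hq₂ : q₂.length ≤ n := by omega
      have hadj : (torsoGraph G X).Adj a c := by
        refine ⟨Ne.symm hca, ha, hc.1, q₁, ?_⟩
        intro w hw
        by_cases hwX : w ∈ X
        · by_cases hwa : w = a
          · exact Or.inl hwa
          · exact Or.inr (Or.inl (hone w hw ⟨hwX, hwa⟩))
        · exact Or.inr (Or.inr hwX)
      obtain ⟨t₀, ht₀a, ht₀c⟩ := hedge hadj
      obtain ⟨t₁, ht₁⟩ := hmem c hc.1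
      have conn₁ : (T.induce ({u | a ∈ bag u} ∪ {u | c ∈ bag u})).Connected :=
        induce_union_connected (hconn a ha).preconnected (hconn c hc.1).preconnected ⟨t₀, ht₀a, ht₀c⟩
      have conn₂ := ih q₂ hq₂ hc.1
      have hU : {u | ∃ x ∈ q.support, x ∈ bag u} =
          ({u | a ∈ bag u} ∪ {u | c ∈ bag u}) ∪ {u | ∃ x ∈ q₂.support, x ∈ bag u} := by
        ext u
        constructor
        · rintro ⟨x, hx', hxb⟩
          rcases (hiff x).1 hx' with h1 | h1
          · have hxX : x ∈ X := hbag u hxb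
            by_cases hxa : x = a
            · subst hxa; exact Or.inl (Or.inl hxb)
            · have : x = c := hone x h1 ⟨hxX, hxa⟩
              subst this; exact Or.inl (Or.inr hxb)
          · exact Or.inr ⟨x, h1, hxb⟩
        · rintro ((hu | hu) | ⟨x, hx', hxb⟩)
          · exact ⟨a, q.start_mem_support, hu⟩
          · exact ⟨c, (hiff c).2 (Or.inl q₁.end_mem_support), hu⟩
          · exact ⟨x, (hiff x).2 (Or.inr hx'), hxb⟩
      rw [hU]
      exact induce_union_connected conn₁.preconnected conn₂.preconnected
        ⟨t₁, Or.inr ht₁, ⟨c, q₂.start_mem_support, ht₁⟩⟩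
    · exact base _ ha hx

/-- The graph obtained from `G` by contracting the edge `xy` onto `x` (`y` becomes isolated). -/
def contractE (G : SimpleGraph V) (x y : V) : SimpleGraph V where
  Adj a b := a ≠ b ∧ a ≠ y ∧ b ≠ y ∧
    (G.Adj a b ∨ (a = x ∧ G.Adj y b) ∨ (b = x ∧ G.Adj a y))
  symm := by
    constructor
    rintro a b ⟨h1, h2, h3, h4⟩
    refine ⟨h1.symm, h3, h2, ?_⟩
    rcases h4 with h | ⟨rfl, h⟩ | ⟨rfl, h⟩
    · exact Or.inl h.symm
    · exact Or.inr (Or.inr ⟨rfl, h.symm⟩)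
    · exact Or.inr (Or.inl ⟨rfl, h.symm⟩)
  loopless := ⟨fun a h => h.1 rfl⟩

/-- The projection map collapsing `y` to `x`. -/
noncomputable def cproj (x y : V) : V → V := fun w =>
  haveI := Classical.dec (w = y)
  if w = y then x else w

lemma cproj_eq_of_ne {x y w : V} (h : w ≠ y) : cproj x y w = w := by
  unfold cproj; simp [h]

lemma cproj_y {x y : V} : cproj x y y = x := by unfold cproj; simp

lemma cproj_ne_y {x y : V} (hxy : x ≠ y) (w : V) : cproj x y w ≠ y := by
  by_cases h : w = y
  · subst h; rw [cproj_y]; exact hxy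
  · rw [cproj_eq_of_ne h]; exact h

lemma y_not_mem_contractE_walk {x y a b : V} (q : (contractE G x y).Walk a b)
    (ha : a ≠ y) : y ∉ q.support := by
  induction q with
  | nil => intro h; simp only [support_nil, List.mem_singleton] at h; exact ha h.symm
  | cons h' p ih =>
    intro h
    rw [support_cons, List.mem_cons] at h
    rcases h with h | h
    · exact ha h.symm
    · exact ih h'.2.2.1 h

lemma contractE_edgeSet_ncard_lt [Fintype V] {x y : V} (hxy : G.Adj x y) :
    (contractE G x y).edgeSet.ncard < G.edgeSet.ncard := by
  classical
  have hxyne : x ≠ y := hxy.ne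
  have h1 : ∀ m ∈ (contractE G x y).edgeSet, y ∉ m := by
    intro m hm
    induction m using Sym2.ind with
    | _ a b =>
      rw [SimpleGraph.mem_edgeSet] at hm
      rw [Sym2.mem_iff]
      rintro (rfl | rfl)
      · exact hm.2.1 rfl
      · exact hm.2.2.1 rfl
  have h2 : ∀ m ∈ (contractE G x y).edgeSet, m ∉ G.edgeSet →
      ∃ b, m = s(x, b) ∧ G.Adj y b ∧ b ≠ x ∧ b ≠ y := by
    intro m hm hnot
    induction m using Sym2.ind with
    | _ a b =>
      rw [SimpleGraph.mem_edgeSet] at hm hnot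
      obtain ⟨hne, hay, hby, hor⟩ := hm
      rcases hor with h | ⟨rfl, h⟩ | ⟨rfl, h⟩
      · exact absurd h hnot
      · exact ⟨b, rfl, h, fun hbx => hne hbx.symm, hby⟩
      · exact ⟨a, Sym2.eq_swap, h.symm, hne, hay⟩
  classical
  set f : Sym2 V → Sym2 V := fun m =>
    if m ∈ G.edgeSet then m else Sym2.map (fun w => if w = x then y else w) m with hf
  have hyf : ∀ (m : Sym2 V) (bb : V), m = s(x, bb) → m ∉ G.edgeSet → bb ≠ x → f m = s(y, bb) := by
    intro m bb hmeq hnot hbx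
    simp only [hf, hmeq, Sym2.map_pair_eq, if_neg (hmeq ▸ hnot)]
    simp [hbx]
  have hmaps : ∀ m ∈ (contractE G x y).edgeSet, f m ∈ G.edgeSet \ {s(x, y)} := by
    intro m hm
    by_cases hmem : m ∈ G.edgeSet
    · simp only [hf, if_pos hmem]
      refine ⟨hmem, ?_⟩
      simp only [Set.mem_singleton_iff]
      intro hrt
      exact h1 m hm (hrt ▸ Sym2.mem_mk_right x y)
    · obtain ⟨bb, hmeq, hadj, hbx, hby⟩ := h2 m hm hmem
      rw [hyf m bb hmeq hmem hbx]
      refine ⟨G.mem_edgeSet.2 hadj, ?_⟩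
      rw [Set.mem_singleton_iff]
      intro hrt
      rw [Sym2.eq_iff] at hrt
      rcases hrt with ⟨h1, h2⟩ | ⟨h1, h2⟩
      · exact hxyne h1.symm
      · exact hbx h2
  have hinj : Set.InjOn f (contractE G x y).edgeSet := by
    intro m₁ hm₁ m₂ hm₂ heq
    by_cases he₁ : m₁ ∈ G.edgeSet <;> by_cases he₂ : m₂ ∈ G.edgeSet
    · simp only [hf, if_pos he₁, if_pos he₂] at heq; exact heq
    · exfalso
      obtain ⟨bb, hmeq, hadj, hbx, hby⟩ := h2 m₂ hm₂ he₂
      rw [hyf m₂ bb hmeq he₂ hbx] at heq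
      simp only [hf, if_pos he₁] at heq
      exact h1 m₁ hm₁ (heq ▸ Sym2.mem_mk_left y _)
    · exfalso
      obtain ⟨bb, hmeq, hadj, hbx, hby⟩ := h2 m₁ hm₁ he₁
      rw [hyf m₁ bb hmeq he₁ hbx] at heq
      simp only [hf, if_pos he₂] at heq
      exact h1 m₂ hm₂ (heq.symm ▸ Sym2.mem_mk_left y _)
    · obtain ⟨b₁, hmeq₁, hadj₁, hbx₁, hby₁⟩ := h2 m₁ hm₁ he₁
      obtain ⟨b₂, hmeq₂, hadj₂, hbx₂, hby₂⟩ := h2 m₂ hm₂ he₂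
      rw [hyf m₁ b₁ hmeq₁ he₁ hbx₁, hyf m₂ b₂ hmeq₂ he₂ hbx₂] at heq
      rw [Sym2.eq_iff] at heq
      rcases heq with ⟨_, hbb⟩ | ⟨hyb, hby'⟩
      · rw [hmeq₁, hmeq₂, hbb]
      · exact absurd hyb.symm hby₂
  calc (contractE G x y).edgeSet.ncard
      ≤ (G.edgeSet \ {s(x, y)}).ncard :=
        Set.ncard_le_ncard_of_injOn f hmaps hinj (Set.toFinite _)
    _ < G.edgeSet.ncard :=
        Set.ncard_diff_singleton_lt_of_mem (G.mem_edgeSet.2 hxy) (Set.toFinite _)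

lemma walk_map_contractE {x y : V} (hxy : G.Adj x y) {a b : V} (p : G.Walk a b) :
    ∃ q : (contractE G x y).Walk (cproj x y a) (cproj x y b),
      ∀ w ∈ q.support, ∃ w' ∈ p.support, cproj x y w' = w := by
  have hxyne : x ≠ y := hxy.ne
  induction p with
  | nil =>
    refine ⟨Walk.nil, ?_⟩
    intro w hw
    simp only [support_nil, List.mem_singleton] at hw
    exact ⟨_, List.mem_singleton_self _, hw.symm⟩
  | @cons u v b h' p' ih =>
    obtain ⟨q', hq'⟩ := ih
    by_cases he : cproj x y u = cproj x y v
    · refine ⟨q'.copy he.symm rfl, ?_⟩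
      intro w hw
      rw [Walk.support_copy] at hw
      obtain ⟨w', hw', hwe⟩ := hq' w hw
      exact ⟨w', by rw [support_cons]; exact List.mem_cons_of_mem _ hw', hwe⟩
    · have hadj : (contractE G x y).Adj (cproj x y u) (cproj x y v) := by
        refine ⟨he, cproj_ne_y hxyne u, cproj_ne_y hxyne v, ?_⟩
        by_cases huy : u = y <;> by_cases hvy : v = y
        · exact absurd (by rw [huy, hvy]) he
        · refine Or.inr (Or.inl ⟨?_, ?_⟩)
          · simp [cproj, huy]
          · have : G.Adj y v := huy ▸ h'
            simpa [cproj, hvy] using this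
        · refine Or.inr (Or.inr ⟨?_, ?_⟩)
          · simp [cproj, hvy]
          · have : G.Adj u y := hvy ▸ h'
            simpa [cproj, huy] using this
        · exact Or.inl (by simpa [cproj, huy, hvy] using h')
      refine ⟨Walk.cons hadj q', ?_⟩
      intro w hw
      rw [support_cons, List.mem_cons] at hw
      rcases hw with rfl | hw
      · exact ⟨u, by rw [support_cons]; exact List.mem_cons_self, rfl⟩
      · obtain ⟨w', hw', hwe⟩ := hq' w hw
        exact ⟨w', by rw [support_cons]; exact List.mem_cons_of_mem _ hw', hwe⟩

lemma walk_lift_contractE {x y : V} (hxy : G.Adj x y) {a b : V}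
    (q : (contractE G x y).Walk a b) :
    ∃ p : G.Walk a b, (∀ w ∈ p.support, w ∈ q.support ∨ w = y) ∧
      (y ∈ p.support → x ∈ q.support ∨ y ∈ q.support) := by
  induction q with
  | nil =>
    refine ⟨Walk.nil, by simp, ?_⟩
    intro h
    simp only [support_nil, List.mem_singleton] at h
    exact Or.inr (by simp [h])
  | @cons u v b h' q' ih =>
    obtain ⟨p', h1, h2⟩ := ih
    have hmemcons : ∀ z ∈ q'.support, z ∈ (Walk.cons h' q').support := by
      intro z hz; rw [support_cons]; exact List.mem_cons_of_mem _ hz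
    rcases h'.2.2.2 with hadj | ⟨rfl, hadj⟩ | ⟨rfl, hadj⟩
    · refine ⟨Walk.cons hadj p', ?_, ?_⟩
      · intro w hw
        rw [support_cons, List.mem_cons] at hw
        rcases hw with rfl | hw
        · exact Or.inl ((Walk.cons h' q').start_mem_support)
        · rcases h1 w hw with h | h
          · exact Or.inl (hmemcons w h)
          · exact Or.inr h
      · intro hy
        rw [support_cons, List.mem_cons] at hy
        rcases hy with hy | hy
        · exact absurd hy.symm h'.2.1
        · rcases h2 hy with h | h
          · exact Or.inl (hmemcons _ h)
          · exact Or.inr (hmemcons _ h)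
    · -- u = x, edge realized as x - y - v
      refine ⟨Walk.cons hxy (Walk.cons hadj p'), ?_, ?_⟩
      · intro w hw
        rw [support_cons, support_cons, List.mem_cons, List.mem_cons] at hw
        rcases hw with rfl | rfl | hw
        · exact Or.inl ((Walk.cons h' q').start_mem_support)
        · exact Or.inr rfl
        · rcases h1 w hw with h | h
          · exact Or.inl (hmemcons w h)
          · exact Or.inr h
      · intro _
        exact Or.inl ((Walk.cons h' q').start_mem_support)
    · -- v = x, edge realized as u - y - x
      refine ⟨Walk.cons hadj (Walk.cons hxy.symm (p'.copy rfl rfl)), ?_, ?_⟩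
      · intro w hw
        rw [support_cons, support_cons, Walk.support_copy, List.mem_cons, List.mem_cons] at hw
        rcases hw with rfl | rfl | hw
        · exact Or.inl ((Walk.cons h' q').start_mem_support)
        · exact Or.inr rfl
        · rcases h1 w hw with h | h
          · exact Or.inl (hmemcons w h)
          · exact Or.inr h
      · intro _
        exact Or.inl (hmemcons _ q'.start_mem_support)

lemma menger_base [Fintype V] (G : SimpleGraph V) (hE : G.edgeSet = ∅) (A B : Set V) (k : ℕ)
    (hk : ∀ S : Set V, IsSep G A B S → k ≤ S.ncard) : Nonempty (WFan G A B k) := by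
  classical
  have hsep : IsSep G A B (A ∩ B) := by
    intro x' y' hx hy p
    have hxy := eq_of_walk_edgeSet_empty hE p
    subst hxy
    exact ⟨x', ⟨hx, hy⟩, p.start_mem_support⟩
  have hcard : k ≤ (A ∩ B).toFinset.card := by
    have := hk _ hsep
    rwa [Set.ncard_eq_toFinset_card'] at this
  obtain ⟨t, hts, htc⟩ := Finset.exists_subset_card_eq hcard
  have htk : Fintype.card ↥t = k := by rw [Fintype.card_coe]; exact htc
  let e : Fin k ≃ ↥t := (Fintype.equivFinOfCardEq htk).symm
  have hmem : ∀ i : Fin k, ((e i : V) ∈ A ∩ B) := fun i => Set.mem_toFinset.1 (hts (e i).2)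
  refine ⟨⟨fun i => e i, fun i => e i, fun _ => Walk.nil, fun i => (hmem i).1,
    fun i => (hmem i).2, ?_⟩⟩
  intro i j hij w hw hw'
  simp only [support_nil, List.mem_singleton] at hw hw'
  subst hw
  exact hij (e.injective (Subtype.ext hw'))

/-- Trim a fan into `S` at the first hit of `S`. -/
lemma WFan.trim [Fintype V] {S A : Set V} {k : ℕ} (F : WFan G A S k) (hkS : S.ncard ≤ k) :
    ∃ (st : Fin k → V) (wk : ∀ i, G.Walk (F.fi i) (st i)),
      (∀ i, st i ∈ S) ∧
      (∀ i, ∀ w ∈ (wk i).support, w ∈ (F.walk i).support) ∧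
      (∀ i, ∀ w ∈ (wk i).support, w ∈ S → w = st i) ∧
      (∀ i, ∀ w ∈ (wk i).support, ∃ r : G.Walk (F.fi i) w,
        (∀ u ∈ r.support, u ∈ (wk i).support) ∧ (∀ u ∈ r.support, u ∈ S → u = w)) ∧
      Function.Injective st ∧
      (∀ s ∈ S, ∃ i, st i = s) := by
  classical
  have key : ∀ i, ∃ (c : V) (q : G.Walk (F.fi i) c), c ∈ S ∧
      (∀ w ∈ q.support, w ∈ (F.walk i).support) ∧
      (∀ w ∈ q.support, w ∈ S → w = c) ∧
      (∀ w ∈ q.support, ∃ r : G.Walk (F.fi i) w,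
        (∀ u ∈ r.support, u ∈ q.support) ∧ (∀ u ∈ r.support, u ∈ S → u = w)) := by
    intro i
    obtain ⟨c, q₁, q₂, hc, hiff, hone, hreach, _⟩ :=
      exists_firstHit (F.walk i) S ⟨_, (F.walk i).end_mem_support, F.la_mem i⟩
    exact ⟨c, q₁, hc, fun w hw => (hiff w).2 (Or.inl hw), hone, hreach⟩
  choose st wk hmem hsub hone hreach using key
  have hinj : Function.Injective st := by
    intro i j hij
    by_contra hne
    exact F.disj i j hne (st i) (hsub i _ (wk i).end_mem_support)
      (hij ▸ hsub j _ (wk j).end_mem_support)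
  refine ⟨st, wk, hmem, hsub, hone, hreach, hinj, ?_⟩
  intro s hs
  by_contra hno
  push_neg at hno
  have himg : Finset.image st Finset.univ ⊆ S.toFinset.erase s := by
    intro z hz
    obtain ⟨i, _, rfl⟩ := Finset.mem_image.1 hz
    exact Finset.mem_erase.2 ⟨fun h => hno i h, Set.mem_toFinset.2 (hmem i)⟩
  have hcard := Finset.card_le_card himg
  rw [Finset.card_image_of_injective _ hinj, Finset.card_univ, Fintype.card_fin] at hcard
  have hS' : S.toFinset.card = S.ncard := (Set.ncard_eq_toFinset_card' S).symm
  have hserase : (S.toFinset.erase s).card = S.toFinset.card - 1 :=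
    Finset.card_erase_of_mem (Set.mem_toFinset.2 hs)
  have hpos : 0 < S.toFinset.card := Finset.card_pos.2 ⟨s, Set.mem_toFinset.2 hs⟩
  omega

/-- Menger's theorem (hard direction), by induction on the number of edges. -/
theorem menger_aux [Fintype V] :
    ∀ (m : ℕ) (G : SimpleGraph V) (A B : Set V) (k : ℕ), G.edgeSet.ncard ≤ m →
      (∀ S : Set V, IsSep G A B S → k ≤ S.ncard) → Nonempty (WFan G A B k) := by
  classical
  intro m
  induction m with
  | zero =>
    intro G A B k hm hk
    have hE : G.edgeSet = ∅ := (Set.ncard_eq_zero (G.edgeSet.toFinite)).1 (Nat.le_zero.1 hm)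
    exact menger_base G hE A B k hk
  | succ m ih =>
    intro G A B k hm hk
    rcases Set.eq_empty_or_nonempty G.edgeSet with hE | ⟨e, he⟩
    · exact menger_base G hE A B k hk
    revert he
    induction e using Sym2.ind with
    | _ x y =>
    intro he
    have hxy : G.Adj x y := G.mem_edgeSet.1 he
    have hxyne : x ≠ y := hxy.ne
    by_cases hGc : ∀ Z : Set V,
        IsSep (contractE G x y) (cproj x y '' A) (cproj x y '' B) Z → k ≤ Z.ncard
    · -- Case (i): contract the edge.
      have hmc : (contractE G x y).edgeSet.ncard ≤ m := by
        have := contractE_edgeSet_ncard_lt hxy; omega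
      obtain ⟨F⟩ := ih (contractE G x y) _ _ k hmc hGc
      have hynotin : ∀ i, y ∉ (F.walk i).support := by
        intro i
        apply y_not_mem_contractE_walk
        obtain ⟨a₀, _, ha₀⟩ := F.fi_mem i
        exact ha₀ ▸ cproj_ne_y hxyne a₀
      have key : ∀ i, ∃ (a' b' : V) (w : G.Walk a' b'), a' ∈ A ∧ b' ∈ B ∧
          (∀ z ∈ w.support, z ∈ (F.walk i).support ∨ z = y) ∧
          (y ∈ w.support → x ∈ (F.walk i).support) := by
        intro i
        obtain ⟨p, hp1, hp2⟩ := walk_lift_contractE hxy (F.walk i)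
        obtain ⟨a₀, ha₀A, ha₀⟩ := F.fi_mem i
        obtain ⟨b₀, hb₀B, hb₀⟩ := F.la_mem i
        have step1 : ∃ (a' : V) (w : G.Walk a' (F.la i)), a' ∈ A ∧
            (∀ z ∈ w.support, z ∈ (F.walk i).support ∨ z = y) ∧
            (y ∈ w.support → x ∈ (F.walk i).support) := by
          by_cases hay : a₀ = y
          · have hfix : F.fi i = x := by rw [← ha₀, hay, cproj_y]
            refine ⟨a₀, Walk.cons (hay ▸ hxy.symm) (p.copy hfix rfl), ha₀A, ?_, ?_⟩
            · intro z hz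
              rw [support_cons, Walk.support_copy, List.mem_cons] at hz
              rcases hz with rfl | hz
              · exact Or.inr hay
              · exact hp1 z hz
            · intro _
              have hsm := (F.walk i).start_mem_support
              revert hsm
              generalize (F.walk i).support = L
              rw [hfix]
              exact id
          · have hfix : F.fi i = a₀ := by rw [← ha₀, cproj_eq_of_ne hay]
            refine ⟨a₀, p.copy hfix rfl, ha₀A, ?_, ?_⟩
            · intro z hz
              rw [Walk.support_copy] at hz
              exact hp1 z hz
            · intro hy'
              rw [Walk.support_copy] at hy'
              rcases hp2 hy' with h | h
              · exact h
              · exact absurd h (hynotin i)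
        obtain ⟨a', w₁, ha', hw₁, hw₁y⟩ := step1
        by_cases hby : b₀ = y
        · have hfix : F.la i = x := by rw [← hb₀, hby, cproj_y]
          refine ⟨a', b₀, (w₁.copy rfl hfix).concat (hby ▸ hxy), ha', hb₀B, ?_, ?_⟩
          · intro z hz
            rw [Walk.support_concat, List.mem_append,
              Walk.support_copy] at hz
            rcases hz with hz | hz
            · exact hw₁ z hz
            · rw [List.mem_singleton] at hz
              exact Or.inr (hz.trans hby)
          · intro _
            have hsm := (F.walk i).end_mem_support
            revert hsm
            generalize (F.walk i).support = L
            rw [hfix]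
            exact id
        · have hfix : F.la i = b₀ := by rw [← hb₀, cproj_eq_of_ne hby]
          refine ⟨a', b₀, w₁.copy rfl hfix, ha', hb₀B, ?_, ?_⟩
          · intro z hz
            rw [Walk.support_copy] at hz
            exact hw₁ z hz
          · intro hy'
            rw [Walk.support_copy] at hy'
            exact hw₁y hy'
      choose af bf wf hA hB hz hy using key
      refine ⟨⟨af, bf, wf, hA, hB, ?_⟩⟩
      intro i j hij w hw hw'
      rcases hz i w hw with h1 | h1
      · rcases hz j w hw' with h2 | h2
        · exact F.disj i j hij w h1 h2
        · exact hynotin i (h2 ▸ h1)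
      · subst h1
        exact F.disj i j hij x (hy i hw) (hy j hw')
    · -- Case (ii): a small separator appears after contraction.
      push_neg at hGc
      obtain ⟨Z₀, hZ₀, hZ₀k⟩ := hGc
      have hnoY : ∀ {a b : V} (q : (contractE G x y).Walk a b),
          a ∈ cproj x y '' A → y ∉ q.support := by
        rintro a b q ⟨a₀, _, rfl⟩
        exact y_not_mem_contractE_walk q (cproj_ne_y hxyne a₀)
      set Z₁ := Z₀ \ {y} with hZ₁def
      have hZ₁ : IsSep (contractE G x y) (cproj x y '' A) (cproj x y '' B) Z₁ := by
        intro a b ha hb q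
        obtain ⟨s, hsZ, hs⟩ := hZ₀ ha hb q
        refine ⟨s, ⟨hsZ, ?_⟩, hs⟩
        intro hsy
        rw [Set.mem_singleton_iff] at hsy
        exact hnoY q ha (hsy ▸ hs)
      have hZ₁k : Z₁.ncard < k :=
        lt_of_le_of_lt (Set.ncard_le_ncard Set.diff_subset (Z₀.toFinite)) hZ₀k
      have hpull : ∀ {a b : V}, a ∈ A → b ∈ B → ∀ p : G.Walk a b,
          ∃ s ∈ Z₁, s ∈ p.support ∨ (s = x ∧ y ∈ p.support) := by
        intro a b ha hb p
        obtain ⟨q, hq⟩ := walk_map_contractE hxy p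
        obtain ⟨s, hsZ, hs⟩ := hZ₁ ⟨a, ha, rfl⟩ ⟨b, hb, rfl⟩ q
        obtain ⟨w', hw', hwe⟩ := hq s hs
        by_cases hwy : w' = y
        · subst hwy
          rw [cproj_y] at hwe
          exact ⟨s, hsZ, Or.inr ⟨hwe.symm, hw'⟩⟩
        · rw [cproj_eq_of_ne hwy] at hwe
          exact ⟨s, hsZ, Or.inl (hwe ▸ hw')⟩
      have hxZ : x ∈ Z₁ := by
        by_contra hx
        have hsep' : IsSep G A B Z₁ := by
          intro a b ha hb p
          obtain ⟨s, hsZ, hs | ⟨rfl, _⟩⟩ := hpull ha hb p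
          · exact ⟨s, hsZ, hs⟩
          · exact absurd hsZ hx
        have := hk _ hsep'
        omega
      set S := insert y Z₁ with hSdef
      have hyZ₁ : y ∉ Z₁ := fun h => h.2 rfl
      have hSsep : IsSep G A B S := by
        intro a b ha hb p
        obtain ⟨s, hsZ, hs | ⟨_, hyp⟩⟩ := hpull ha hb p
        · exact ⟨s, Set.mem_insert_of_mem _ hsZ, hs⟩
        · exact ⟨y, Set.mem_insert _ _, hyp⟩
      have hSk : S.ncard = k := by
        have h1 : S.ncard = Z₁.ncard + 1 := Set.ncard_insert_of_notMem hyZ₁ (Z₁.toFinite)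
        have h2 := hk _ hSsep
        omega
      have hxS : x ∈ S := Set.mem_insert_of_mem _ hxZ
      have hyS : y ∈ S := Set.mem_insert _ _
      set Ge := G.deleteEdges {s(x, y)} with hGedef
      have hGeE : Ge.edgeSet = G.edgeSet \ {s(x, y)} := G.edgeSet_deleteEdges _
      have hGele : Ge ≤ G := G.deleteEdges_le _
      have hme : Ge.edgeSet.ncard ≤ m := by
        have hlt : Ge.edgeSet.ncard < G.edgeSet.ncard := by
          rw [hGeE]
          exact Set.ncard_diff_singleton_lt_of_mem he (Set.toFinite _)
        omega
      have hGeSsep : IsSep Ge A B S := by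
        intro a b ha hb p
        obtain ⟨s, hsS, hs⟩ := hSsep ha hb
          (p.transfer G (fun ed hed => (hGeE ▸ p.edges_subset_edgeSet hed).1))
        rw [Walk.support_transfer] at hs
        exact ⟨s, hsS, hs⟩
      have hhit : ∀ {a b : V} (p : G.Walk a b), (∃ w ∈ p.support, w ∈ S) →
          ∃ (c : V) (q : Ge.Walk a c), c ∈ S ∧ (∀ w ∈ q.support, w ∈ p.support) := by
        intro a b p hex
        obtain ⟨c, q₁, _, hc, hiff, hone, _, _⟩ := exists_firstHit p S hex
        have hq₁e : ∀ ed ∈ q₁.edges, ed ∈ Ge.edgeSet := by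
          intro ed hed
          rw [hGeE]
          refine ⟨q₁.edges_subset_edgeSet hed, ?_⟩
          rw [Set.mem_singleton_iff]
          rintro rfl
          have hx' := q₁.fst_mem_support_of_mem_edges hed
          have hy' := q₁.snd_mem_support_of_mem_edges hed
          exact hxyne ((hone x hx' hxS).trans (hone y hy' hyS).symm)
        refine ⟨c, q₁.transfer Ge hq₁e, hc, ?_⟩
        rw [Walk.support_transfer]
        intro w hw
        exact (hiff w).2 (Or.inl hw)
      have hsepA : ∀ Z : Set V, IsSep Ge A S Z → k ≤ Z.ncard := by
        intro Z hZ
        apply hk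
        intro a b ha hb p
        obtain ⟨s0, hs0S, hs0⟩ := hSsep ha hb p
        obtain ⟨c, q, hc, hsub⟩ := hhit p ⟨s0, hs0, hs0S⟩
        obtain ⟨z, hzZ, hzm⟩ := hZ ha hc q
        exact ⟨z, hzZ, hsub z hzm⟩
      have hsepB : ∀ Z : Set V, IsSep Ge B S Z → k ≤ Z.ncard := by
        intro Z hZ
        apply hk
        intro a b ha hb p
        obtain ⟨s0, hs0S, hs0⟩ := hSsep ha hb p
        have hrev : ∃ w ∈ p.reverse.support, w ∈ S := by
          rw [Walk.support_reverse]
          exact ⟨s0, List.mem_reverse.2 hs0, hs0S⟩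
        obtain ⟨c, q, hc, hsub⟩ := hhit p.reverse hrev
        obtain ⟨z, hzZ, hzm⟩ := hZ hb hc q
        have hzp := hsub z hzm
        rw [Walk.support_reverse, List.mem_reverse] at hzp
        exact ⟨z, hzZ, hzp⟩
      obtain ⟨F₁⟩ := ih Ge A S k hme hsepA
      obtain ⟨F₂⟩ := ih Ge B S k hme hsepB
      have hSk' : S.ncard ≤ k := le_of_eq hSk
      obtain ⟨st₁, wk₁, hst₁S, hsub₁, hone₁, hreach₁, hinj₁, hsurj₁⟩ := F₁.trim hSk'
      obtain ⟨st₂, wk₂, hst₂S, hsub₂, hone₂, hreach₂, hinj₂, hsurj₂⟩ := F₂.trim hSk'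
      have hmatch : ∀ i : Fin k, ∃ j, st₂ j = st₁ i := fun i => hsurj₂ _ (hst₁S i)
      choose jj hjj using hmatch
      have hjinj : Function.Injective jj := by
        intro i i' hii
        apply hinj₁
        rw [← hjj i, ← hjj i', hii]
      have hcross : ∀ (i j : Fin k) (w : V), w ∈ (wk₁ i).support → w ∈ (wk₂ j).support →
          w = st₁ i ∧ w = st₂ j := by
        intro i j w hw₁ hw₂
        by_cases hwS : w ∈ S
        · exact ⟨hone₁ i w hw₁ hwS, hone₂ j w hw₂ hwS⟩
        · exfalso
          obtain ⟨r₁, hr₁sub, hr₁⟩ := hreach₁ i w hw₁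
          obtain ⟨r₂, hr₂sub, hr₂⟩ := hreach₂ j w hw₂
          obtain ⟨s, hsS, hs⟩ := hGeSsep (F₁.fi_mem i) (F₂.fi_mem j) (r₁.append r₂.reverse)
          rw [Walk.mem_support_append_iff] at hs
          rcases hs with h | h
          · exact hwS ((hr₁ s h hsS) ▸ hsS)
          · rw [Walk.support_reverse, List.mem_reverse] at h
            exact hwS ((hr₂ s h hsS) ▸ hsS)
      refine ⟨WFan.mono hGele ⟨F₁.fi, fun i => F₂.fi (jj i),
        fun i => (wk₁ i).append ((wk₂ (jj i)).reverse.copy (hjj i) rfl),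
        F₁.fi_mem, fun i => F₂.fi_mem (jj i), ?_⟩⟩
      intro i j hij w hw hw'
      have hmem₂ : ∀ {a : Fin k} {z : V},
          z ∈ (((wk₂ (jj a)).reverse.copy (hjj a) rfl)).support → z ∈ (wk₂ (jj a)).support := by
        intro a z hz
        rw [Walk.support_copy, Walk.support_reverse, List.mem_reverse] at hz
        exact hz
      rw [Walk.mem_support_append_iff] at hw hw'
      rcases hw with h1 | h1 <;> rcases hw' with h2 | h2
      · exact F₁.disj i j hij w (hsub₁ i w h1) (hsub₁ j w h2)
      · obtain ⟨ha', hb'⟩ := hcross i (jj j) w h1 (hmem₂ h2)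
        exact hij (hinj₁ (ha'.symm.trans (hb'.trans (hjj j))))
      · obtain ⟨ha', hb'⟩ := hcross j (jj i) w h2 (hmem₂ h1)
        exact hij (hinj₁ ((hb'.trans (hjj i)).symm.trans ha'))
      · exact F₂.disj (jj i) (jj j) (fun h => hij (hjinj h)) w
          (hsub₂ _ w (hmem₂ h1)) (hsub₂ _ w (hmem₂ h2))

section SetSumFacts

variable [Fintype V]

lemma setSum_union_disjoint (d : V → ℕ) {P Q : Set V} (h : Disjoint P Q) :
    setSum d (P ∪ Q) = setSum d P + setSum d Q := by
  classical
  unfold setSum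
  have hfs : (P ∪ Q).toFinite.toFinset = P.toFinite.toFinset ∪ Q.toFinite.toFinset := by
    ext v
    simp only [Set.Finite.mem_toFinset, Finset.mem_union, Set.mem_union]
  rw [hfs, Finset.sum_union]
  rw [Finset.disjoint_left]
  intro a ha hb
  rw [Set.Finite.mem_toFinset] at ha hb
  exact Set.disjoint_left.1 h ha hb

lemma setSum_le_card_mul (d : V → ℕ) (P : Set V) {n : ℕ} (hn : ∀ v, d v ≤ n) :
    setSum d P ≤ P.ncard * n := by
  unfold setSum
  calc ∑ v ∈ P.toFinite.toFinset, d v ≤ P.toFinite.toFinset.card • n :=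
        Finset.sum_le_card_nsmul _ _ _ (fun x _ => hn x)
    _ = P.ncard * n := by rw [smul_eq_mul, Set.ncard_eq_toFinset_card P P.toFinite]

lemma card_le_setSum (d : V → ℕ) (P : Set V) (h1 : ∀ v, 1 ≤ d v) :
    P.ncard ≤ setSum d P := by
  unfold setSum
  calc P.ncard = P.toFinite.toFinset.card * 1 := by
        rw [mul_one, Set.ncard_eq_toFinset_card P P.toFinite]
    _ = P.toFinite.toFinset.card • 1 := by rw [smul_eq_mul]
    _ ≤ ∑ v ∈ P.toFinite.toFinset, d v := Finset.card_nsmul_le_sum _ _ _ (fun x _ => h1 x)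

lemma setSum_congr (d : V → ℕ) {P Q : Set V} (h : P = Q) : setSum d P = setSum d Q := by
  rw [h]

end SetSumFacts

lemma arith_key (nn k a b3 Da D3 c1 c2 D1 D2 : ℕ) (h1 : Da ≤ a * nn) (h2 : a + 1 ≤ b3)
    (h3 : a ≤ k + 1) (h4 : b3 ≤ D3) :
    (c1 + c2 + a) * nn * (k + 1) + (D1 + (D2 + Da))
      < (c1 + c2 + b3) * nn * (k + 1) + (D1 + (D2 + D3)) := by
  have e1 : (a + 1) * (nn * (k + 1)) ≤ b3 * (nn * (k + 1)) := Nat.mul_le_mul_right _ h2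
  have e2 : a * nn ≤ (k + 1) * nn := Nat.mul_le_mul_right _ h3
  nlinarith

end MengerDev

set_option maxHeartbeats 1000000

/-- Given a torso tree decomposition `(X, (T, bag))` in `G` of width at most `k` covering `W`,
a weight function `d : V → {1, …, n}`, and a pair `(t, S)` witnessing that `bag t` is not
`d`-linked into `W` (i.e. `S` is a `(bag t, W)`-separator with `|S| < |bag t|`, or
`|S| = |bag t|` and `d(S) < d(bag t)`), there is a torso tree decomposition `(X', (T', bag'))`
covering `W`, of width at most `k`, with at most `|V(T)|` nodes, and with
`φ_d(X') < φ_d(X)` where `φ_d(Z) = |Z|·n·(k+1) + d(Z)`. -/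
theorem make_d_linked {V ι : Type} [Fintype V] [Fintype ι]
    (G : SimpleGraph V) (k : ℕ) (W : Set V)
    (X : Set V) (T : SimpleGraph ι) (bag : ι → Set V)
    (hT : IsTorsoTreeDecomp G X T bag) (hcov : W ⊆ X)
    (hwidth : ∀ u, (bag u).ncard ≤ k + 1)
    (d : V → ℕ) (hd : ∀ v, 1 ≤ d v ∧ d v ≤ Fintype.card V)
    (t : ι) (S : Set V) (hS : IsSep G (bag t) W S)
    (hwit : S.ncard < (bag t).ncard ∨
      (S.ncard = (bag t).ncard ∧ setSum d S < setSum d (bag t))) :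
    ∃ (ι' : Type) (_ : Fintype ι') (T' : SimpleGraph ι') (bag' : ι' → Set V) (X' : Set V),
      IsTorsoTreeDecomp G X' T' bag' ∧ W ⊆ X' ∧
      (∀ u, (bag' u).ncard ≤ k + 1) ∧
      Fintype.card ι' ≤ Fintype.card ι ∧
      X'.ncard * Fintype.card V * (k + 1) + setSum d X'
        < X.ncard * Fintype.card V * (k + 1) + setSum d X := by
  classical
  set nn := Fintype.card V with hnn
  set M := nn * nn + 1 with hM
  -- every weight-sum is < M
  have hdsum_lt : ∀ P : Set V, setSum d P < M := by
    intro P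
    have h1 : setSum d P ≤ P.ncard * nn := setSum_le_card_mul d P (fun v => (hd v).2)
    have h2 : P.ncard ≤ nn := by
      have := Set.ncard_le_ncard (Set.subset_univ P) (Set.toFinite _)
      rwa [Set.ncard_univ, Nat.card_eq_fintype_card] at this
    have h3 : P.ncard * nn ≤ nn * nn := Nat.mul_le_mul_right _ h2
    omega
  -- choose a lexicographically optimal separator S₀
  have hSne : {v : ℕ | ∃ P : Set V, IsSep G (bag t) W P ∧
      P.ncard * M + setSum d P = v}.Nonempty := ⟨_, S, hS, rfl⟩
  obtain ⟨S₀, hS₀sep, hS₀f⟩ := Nat.sInf_mem hSne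
  have hfmin : ∀ P, IsSep G (bag t) W P →
      S₀.ncard * M + setSum d S₀ ≤ P.ncard * M + setSum d P := by
    intro P hP
    rw [hS₀f]
    exact Nat.sInf_le ⟨P, hP, rfl⟩
  have hcard_min : ∀ P, IsSep G (bag t) W P → S₀.ncard ≤ P.ncard := by
    intro P hP
    by_contra hgt
    push_neg at hgt
    have h1 := hdsum_lt S₀
    have h2 := hdsum_lt P
    have h3 := hfmin P hP
    have h4 : P.ncard + 1 ≤ S₀.ncard := hgt
    nlinarith
  have hwit₀ : S₀.ncard < (bag t).ncard ∨
      (S₀.ncard = (bag t).ncard ∧ setSum d S₀ < setSum d (bag t)) := by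
    rcases hwit with h | ⟨heq, hlt⟩
    · exact Or.inl (lt_of_le_of_lt (hcard_min S hS) h)
    · rcases lt_or_eq_of_le (hcard_min S hS) with h | h
      · exact Or.inl (heq ▸ h)
      · refine Or.inr ⟨h.trans heq, ?_⟩
        have h3 := hfmin S hS
        have h4 : S₀.ncard * M = S.ncard * M := by rw [h]
        omega
  -- reachability sides
  set A := reachG G (bag t) S₀ with hA
  set Bs := reachG G W S₀ with hBs
  have hAS : ∀ v ∈ A, v ∉ S₀ := fun v hv => not_mem_S_of_mem_reachG hv
  have hBS : ∀ v ∈ Bs, v ∉ S₀ := fun v hv => not_mem_S_of_mem_reachG hv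
  have hABdisj : ∀ v, v ∈ A → v ∈ Bs → False := by
    rintro v ⟨xa, hxa, hxaS, pa, hpa⟩ ⟨xb, hxb, hxbS, pb, hpb⟩
    obtain ⟨s, hsS, hs⟩ := hS₀sep hxa hxb (pa.append pb.reverse)
    rw [Walk.mem_support_append_iff] at hs
    rcases hs with h | h
    · exact hpa s h hsS
    · rw [Walk.support_reverse, List.mem_reverse] at h
      exact hpb s h hsS
  have hbagtA : ∀ v ∈ bag t, v ∉ S₀ → v ∈ A := by
    intro v hv hvS
    exact ⟨v, hv, hvS, Walk.nil, by
      intro w hw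
      simp only [Walk.support_nil, List.mem_singleton] at hw
      subst hw; exact hvS⟩
  have hbagtX : bag t ⊆ X := hT.bag_subset t
  -- Menger's theorem application
  have hmin : ∀ Z : Set V, IsSep G (bag t) S₀ Z → S₀.ncard ≤ Z.ncard := by
    intro Z hZ
    apply hcard_min
    intro a b ha hb p
    obtain ⟨s0, hs0S, hs0⟩ := hS₀sep ha hb p
    obtain ⟨c, q₁, _, hc, hiff, _, _, _⟩ := exists_firstHit p S₀ ⟨s0, hs0, hs0S⟩
    obtain ⟨z, hzZ, hz⟩ := hZ ha hc q₁
    exact ⟨z, hzZ, (hiff z).2 (Or.inl hz)⟩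
  obtain ⟨F⟩ := menger_aux (G.edgeSet.ncard) G (bag t) S₀ (S₀.ncard) le_rfl hmin
  obtain ⟨st, wk, hstS, hsub, honeS, hreach, hinjst, hsurjst⟩ := F.trim le_rfl
  have hdisj : ∀ i j, i ≠ j → ∀ w, w ∈ (wk i).support → w ∉ (wk j).support :=
    fun i j hij w hw hw' => F.disj i j hij w (hsub i w hw) (hsub j w hw')
  have hA_sub : ∀ i, ∀ w ∈ (wk i).support, w ≠ st i → w ∈ A := by
    intro i w hw hne
    obtain ⟨r, hrsub, hrS⟩ := hreach i w hw
    have hwS : w ∉ S₀ := fun h => hne (honeS i w hw h)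
    have hravoid : ∀ z ∈ r.support, z ∉ S₀ := by
      intro z hz hzS
      exact hwS ((hrS z hz hzS) ▸ hzS)
    have hstart : F.fi i ∉ S₀ := hravoid _ r.start_mem_support
    exact ⟨F.fi i, F.fi_mem i, hstart, r, hravoid⟩
  -- the new vertex set and bags
  set X' := (X ∩ Bs) ∪ S₀ with hX'def
  set bag' : ι → Set V :=
    fun u => (bag u ∩ Bs) ∪ (st '' {i | ∃ x ∈ (wk i).support, x ∈ bag u}) with hbag'def
  have hW_X' : W ⊆ X' := by
    intro w hw
    by_cases hwS : w ∈ S₀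
    · exact Or.inr hwS
    · refine Or.inl ⟨hcov hw, w, hw, hwS, Walk.nil, ?_⟩
      intro z hz
      simp only [Walk.support_nil, List.mem_singleton] at hz
      subst hz; exact hwS
  have hbagt_in : ∀ v ∈ bag t, v ∈ A ∪ S₀ := by
    intro v hv
    by_cases h : v ∈ S₀
    · exact Or.inr h
    · exact Or.inl (hbagtA v hv h)
  -- σ-membership helper
  have hsigma : ∀ (u : ι) (s0 : V), s0 ∈ S₀ → (∃ i, st i = s0 ∧
      ∃ x ∈ (wk i).support, x ∈ bag u) → s0 ∈ bag' u := by
    rintro u s0 _ ⟨i, hi, x, hx, hxb⟩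
    exact Or.inr ⟨i, ⟨x, hx, hxb⟩, hi⟩
  -- main coverage claim
  have hcov_main : ∀ u₁ u₂ : V, u₁ ∈ X ∩ Bs → u₂ ∈ X' → (torsoGraph G X').Adj u₁ u₂ →
      ∃ w₀, u₁ ∈ bag' w₀ ∧ u₂ ∈ bag' w₀ := by
    intro v u₂ hv hu₂ hadj
    obtain ⟨hne, _, _, p, hp⟩ := hadj
    have hexists : ∃ w ∈ p.support, w ∈ X' \ {v} :=
      ⟨u₂, p.end_mem_support, hu₂, fun h => hne (Set.mem_singleton_iff.1 h).symm⟩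
    obtain ⟨c, q₁, _, hc, hiff, hone', hreach', _⟩ := exists_firstHit p (X' \ {v}) hexists
    have hcu₂ : c = u₂ := by
      rcases hp c ((hiff c).2 (Or.inl q₁.end_mem_support)) with h | h | h
      · exact absurd (Set.mem_singleton_iff.2 h) hc.2
      · exact h
      · exact absurd hc.1 h
    have hcu₂' : u₂ = c := hcu₂.symm
    subst hcu₂' 
    have hvBs : v ∈ Bs := hv.2
    have hvS : v ∉ S₀ := hBS v hvBs
    have hSsub : S₀ ⊆ X' \ {v} := by
      intro z hz
      exact ⟨Or.inr hz, fun h => hvS ((Set.mem_singleton_iff.1 h) ▸ hz)⟩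
    have hint : ∀ w ∈ q₁.support, w ≠ v → w ≠ u₂ → (w ∈ Bs ∧ w ∉ X) := by
      intro w hw hwv hwu
      have hwX' : w ∉ X' \ {v} := fun h => hwu (hone' w hw h)
      obtain ⟨r, hrsub, hrone⟩ := hreach' w hw
      have hravoid : ∀ z ∈ r.support, z ∉ S₀ := by
        intro z hz hzS
        exact hwX' ((hrone z hz (hSsub hzS)) ▸ hSsub hzS)
      have hwBs : w ∈ Bs := reachG_closed hvBs r hravoid
      refine ⟨hwBs, fun hwX => ?_⟩
      exact hwX' ⟨Or.inl ⟨hwX, hwBs⟩, fun h => hwv (Set.mem_singleton_iff.1 h)⟩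
    by_cases hu₂X : u₂ ∈ X
    · -- old torso edge
      have hadjX : (torsoGraph G X).Adj v u₂ := by
        refine ⟨hne, hv.1, hu₂X, q₁, ?_⟩
        intro w hw
        by_cases hw1 : w = v
        · exact Or.inl hw1
        · by_cases hw2 : w = u₂
          · exact Or.inr (Or.inl hw2)
          · exact Or.inr (Or.inr (hint w hw hw1 hw2).2)
      obtain ⟨w₀, hw₀v, hw₀u⟩ := hT.edge_bag hadjX
      refine ⟨w₀, Or.inl ⟨hw₀v, hvBs⟩, ?_⟩
      rcases hu₂ with h | h
      · exact Or.inl ⟨hw₀u, h.2⟩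
      · obtain ⟨i₀, hi₀⟩ := hsurjst u₂ h
        exact hsigma w₀ u₂ h ⟨i₀, hi₀, st i₀, (wk i₀).end_mem_support,
          by rw [hi₀]; exact hw₀u⟩
    · -- u₂ ∈ S₀ \ X
      have hu₂S : u₂ ∈ S₀ := by
        rcases hu₂ with h | h
        · exact absurd h.1 hu₂X
        · exact h
      obtain ⟨i₀, hi₀⟩ := hsurjst u₂ hu₂S
      have hfiX : F.fi i₀ ∈ X := hbagtX (F.fi_mem i₀)
      have hfiv : F.fi i₀ ≠ v := by
        intro h
        rcases hbagt_in _ (F.fi_mem i₀) with hh | hh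
        · exact hABdisj _ (h ▸ hh) hvBs
        · exact hvS (h ▸ hh)
      set r₂ := q₁.append ((wk i₀).copy rfl hi₀).reverse with hr₂def
      have hex2 : ∃ w ∈ r₂.support, w ∈ X \ {v} := by
        refine ⟨F.fi i₀, ?_, hfiX, fun h => hfiv (Set.mem_singleton_iff.1 h)⟩
        rw [hr₂def, Walk.mem_support_append_iff]
        right
        rw [Walk.support_reverse, List.mem_reverse]
        exact ((wk i₀).copy rfl hi₀).start_mem_support
      obtain ⟨c₂, w₁, _, hc₂, hiff₂, hone₂', _, _⟩ := exists_firstHit r₂ (X \ {v}) hex2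
      have hc₂P : c₂ ∈ (wk i₀).support := by
        have hc₂r := (hiff₂ c₂).2 (Or.inl w₁.end_mem_support)
        rw [hr₂def, Walk.mem_support_append_iff] at hc₂r
        rcases hc₂r with h | h
        · exfalso
          by_cases hh1 : c₂ = v
          · exact hc₂.2 (Set.mem_singleton_iff.2 hh1)
          · by_cases hh2 : c₂ = u₂
            · exact hu₂X (hh2 ▸ hc₂.1)
            · exact (hint c₂ h hh1 hh2).2 hc₂.1
        · rw [Walk.support_reverse, List.mem_reverse, Walk.support_copy] at h
          exact h
      have hadjX : (torsoGraph G X).Adj v c₂ := by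
        refine ⟨fun h => hc₂.2 (Set.mem_singleton_iff.2 h.symm), hv.1, hc₂.1, w₁, ?_⟩
        intro w hw
        by_cases hw1 : w = v
        · exact Or.inl hw1
        · by_cases hw2 : w = c₂
          · exact Or.inr (Or.inl hw2)
          · refine Or.inr (Or.inr (fun hwX => hw2 (hone₂' w hw
              ⟨hwX, fun h => hw1 (Set.mem_singleton_iff.1 h)⟩)))
      obtain ⟨w₀, hw₀v, hw₀c⟩ := hT.edge_bag hadjX
      exact ⟨w₀, Or.inl ⟨hw₀v, hvBs⟩, hsigma w₀ u₂ hu₂S ⟨i₀, hi₀, c₂, hc₂P, hw₀c⟩⟩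
  -- the decomposition fields
  have hbs' : ∀ u, bag' u ⊆ X' := by
    rintro u z (⟨hzb, hzB⟩ | ⟨i, _, hsti⟩)
    · exact Or.inl ⟨hT.bag_subset u hzb, hzB⟩
    · exact Or.inr (hsti ▸ hstS i)
  have hmem' : ∀ v ∈ X', ∃ u, v ∈ bag' u := by
    intro v hv
    by_cases hvS : v ∈ S₀
    · obtain ⟨i, hi⟩ := hsurjst v hvS
      exact ⟨t, hsigma t v hvS ⟨i, hi, F.fi i, (wk i).start_mem_support, F.fi_mem i⟩⟩
    · have hvmem : v ∈ X ∩ Bs := by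
        rcases hv with h | h
        · exact h
        · exact absurd h hvS
      obtain ⟨u, hu⟩ := hT.mem_bag v hvmem.1
      exact ⟨u, Or.inl ⟨hu, hvmem.2⟩⟩
  have hedge' : ∀ ⦃u₁ u₂ : V⦄, (torsoGraph G X').Adj u₁ u₂ →
      ∃ w₀, u₁ ∈ bag' w₀ ∧ u₂ ∈ bag' w₀ := by
    intro u₁ u₂ hadj
    have hu₁ : u₁ ∈ X' := hadj.2.1
    have hu₂ : u₂ ∈ X' := hadj.2.2.1
    by_cases h1 : u₁ ∈ S₀
    · by_cases h2 : u₂ ∈ S₀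
      · obtain ⟨i, hi⟩ := hsurjst u₁ h1
        obtain ⟨j, hj⟩ := hsurjst u₂ h2
        exact ⟨t, hsigma t u₁ h1 ⟨i, hi, F.fi i, (wk i).start_mem_support, F.fi_mem i⟩,
          hsigma t u₂ h2 ⟨j, hj, F.fi j, (wk j).start_mem_support, F.fi_mem j⟩⟩
      · have hu₂' : u₂ ∈ X ∩ Bs := by
          rcases hu₂ with h | h
          · exact h
          · exact absurd h h2
        obtain ⟨w₀, hw, hw'⟩ := hcov_main u₂ u₁ hu₂' hu₁ hadj.symm
        exact ⟨w₀, hw', hw⟩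
    · have hu₁' : u₁ ∈ X ∩ Bs := by
        rcases hu₁ with h | h
        · exact h
        · exact absurd h h1
      exact hcov_main u₁ u₂ hu₁' hu₂ hadj
  have hconn' : ∀ v ∈ X', (T.induce {u | v ∈ bag' u}).Connected := by
    intro v hv
    by_cases hvS : v ∈ S₀
    · obtain ⟨i₀, hi₀⟩ := hsurjst v hvS
      have hset : {u | v ∈ bag' u} = {u | ∃ x ∈ (wk i₀).support, x ∈ bag u} := by
        ext u
        constructor
        · rintro (⟨_, hvBs⟩ | ⟨i, ⟨x, hx, hxb⟩, hsti⟩)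
          · exact absurd hvS (hBS v hvBs)
          · have hii : i = i₀ := hinjst (hsti.trans hi₀.symm)
            subst hii
            exact ⟨x, hx, hxb⟩
        · rintro ⟨x, hx, hxb⟩
          exact hsigma u v hvS ⟨i₀, hi₀, x, hx, hxb⟩
      rw [hset]
      exact chain_connected hT.conn hT.mem_bag hT.edge_bag hT.bag_subset
        (wk i₀).length (wk i₀) le_rfl (hbagtX (F.fi_mem i₀))
    · have hvmem : v ∈ X ∩ Bs := by
        rcases hv with h | h
        · exact h
        · exact absurd h hvS
      have hset : {u | v ∈ bag' u} = {u | v ∈ bag u} := by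
        ext u
        constructor
        · rintro (⟨hvb, _⟩ | ⟨i, _, hsti⟩)
          · exact hvb
          · exact absurd (hsti ▸ hstS i) hvS
        · intro h
          exact Or.inl ⟨h, hvmem.2⟩
      rw [hset]
      exact hT.conn v hvmem.1
  -- width bound
  have hwidth' : ∀ u, (bag' u).ncard ≤ k + 1 := by
    intro u
    set E1 := bag u ∩ (Bs ∪ S₀) with hE1
    set E2 := (st '' {i | ∃ x ∈ (wk i).support, x ∈ bag u}) \ bag u with hE2
    have hsubE : bag' u ⊆ E1 ∪ E2 := by
      rintro z (⟨hz1, hz2⟩ | hz)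
      · exact Or.inl ⟨hz1, Or.inl hz2⟩
      · by_cases hzb : z ∈ bag u
        · refine Or.inl ⟨hzb, Or.inr ?_⟩
          obtain ⟨i, _, hi⟩ := hz
          exact hi ▸ hstS i
        · exact Or.inr ⟨hz, hzb⟩
    have hE2card : E2.ncard ≤ (bag u ∩ A).ncard := by
      have hchoice : ∀ z ∈ E2, ∃ x, x ∈ bag u ∩ A ∧ ∃ i, st i = z ∧ x ∈ (wk i).support := by
        rintro z ⟨⟨i, ⟨x, hx, hxb⟩, hsti⟩, hzb⟩
        refine ⟨x, ⟨hxb, ?_⟩, i, hsti, hx⟩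
        apply hA_sub i x hx
        intro hxe
        exact hzb (by rw [← hsti, ← hxe]; exact hxb)
      choose g hg1 hg2 using hchoice
      set g' : V → V := fun z => if h : z ∈ E2 then g z h else z with hg'def
      have hg'1 : ∀ z ∈ E2, g' z ∈ bag u ∩ A := by
        intro z hz
        simp only [hg'def, dif_pos hz]
        exact hg1 z hz
      refine Set.ncard_le_ncard_of_injOn g' hg'1 ?_ (Set.toFinite _)
      intro z hz z' hz' heq
      simp only [hg'def, dif_pos hz, dif_pos hz'] at heq
      obtain ⟨i, hi, hxi⟩ := hg2 z hz
      obtain ⟨i', hi', hxi'⟩ := hg2 z' hz'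
      have hii : i = i' := by
        by_contra hne'
        exact hdisj i i' hne' _ hxi (heq ▸ hxi')
      rw [← hi, ← hi', hii]
    have hdisjE : Disjoint E1 (bag u ∩ A) := by
      rw [Set.disjoint_left]
      rintro z ⟨_, hz2⟩ ⟨_, hzA⟩
      rcases hz2 with h | h
      · exact hABdisj z hzA h
      · exact hAS z hzA h
    calc (bag' u).ncard ≤ (E1 ∪ E2).ncard := Set.ncard_le_ncard hsubE (Set.toFinite _)
      _ ≤ E1.ncard + E2.ncard := Set.ncard_union_le _ _
      _ ≤ E1.ncard + (bag u ∩ A).ncard := by omega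
      _ = (E1 ∪ (bag u ∩ A)).ncard :=
          (Set.ncard_union_eq hdisjE (Set.toFinite _) (Set.toFinite _)).symm
      _ ≤ (bag u).ncard := by
          refine Set.ncard_le_ncard ?_ (Set.toFinite _)
          rintro z (⟨h, _⟩ | ⟨h, _⟩) <;> exact h
      _ ≤ k + 1 := hwidth u
  -- potential decrease
  have harith : X'.ncard * nn * (k + 1) + setSum d X'
      < X.ncard * nn * (k + 1) + setSum d X := by
    have hd1 : Disjoint (X ∩ Bs) S₀ := by
      rw [Set.disjoint_left]
      rintro z ⟨_, hz2⟩ hzS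
      exact hBS z hz2 hzS
    have hd2 : Disjoint (X ∩ S₀) (X \ (Bs ∪ S₀)) := by
      rw [Set.disjoint_left]
      rintro z ⟨_, hz2⟩ ⟨_, hz3⟩
      exact hz3 (Or.inr hz2)
    have hd3 : Disjoint (X ∩ Bs) ((X ∩ S₀) ∪ (X \ (Bs ∪ S₀))) := by
      rw [Set.disjoint_left]
      rintro z ⟨_, hz2⟩ (⟨_, hz3⟩ | ⟨_, hz3⟩)
      · exact hBS z hz2 hz3
      · exact hz3 (Or.inl hz2)
    have hXeq : X = (X ∩ Bs) ∪ ((X ∩ S₀) ∪ (X \ (Bs ∪ S₀))) := by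
      ext z
      constructor
      · intro hz
        by_cases hb : z ∈ Bs
        · exact Or.inl ⟨hz, hb⟩
        · by_cases hs : z ∈ S₀
          · exact Or.inr (Or.inl ⟨hz, hs⟩)
          · exact Or.inr (Or.inr ⟨hz, fun h => h.elim hb hs⟩)
      · rintro (⟨h, _⟩ | ⟨h, _⟩ | ⟨h, _⟩) <;> exact h
    have hS₀eq : S₀ = (X ∩ S₀) ∪ (S₀ \ X) := by
      ext z
      constructor
      · intro hz
        by_cases hx : z ∈ X
        · exact Or.inl ⟨hx, hz⟩
        · exact Or.inr ⟨hz, hx⟩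
      · rintro (⟨_, h⟩ | ⟨h, _⟩) <;> exact h
    have hd4 : Disjoint (X ∩ S₀) (S₀ \ X) := by
      rw [Set.disjoint_left]
      rintro z ⟨hz1, _⟩ ⟨_, hz3⟩
      exact hz3 hz1
    -- cardinals
    have hXcard : X.ncard = (X ∩ Bs).ncard + ((X ∩ S₀).ncard + (X \ (Bs ∪ S₀)).ncard) := by
      conv_lhs => rw [hXeq]
      rw [Set.ncard_union_eq hd3 (Set.toFinite _) (Set.toFinite _),
        Set.ncard_union_eq hd2 (Set.toFinite _) (Set.toFinite _)]
    have hS₀card : S₀.ncard = (X ∩ S₀).ncard + (S₀ \ X).ncard := by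
      conv_lhs => rw [hS₀eq]
      rw [Set.ncard_union_eq hd4 (Set.toFinite _) (Set.toFinite _)]
    have hX'card : X'.ncard = (X ∩ Bs).ncard + S₀.ncard := by
      rw [hX'def, Set.ncard_union_eq hd1 (Set.toFinite _) (Set.toFinite _)]
    -- sums
    have hXsum : setSum d X = setSum d (X ∩ Bs) +
        (setSum d (X ∩ S₀) + setSum d (X \ (Bs ∪ S₀))) := by
      conv_lhs => rw [hXeq]
      rw [setSum_union_disjoint d hd3, setSum_union_disjoint d hd2]
    have hS₀sum : setSum d S₀ = setSum d (X ∩ S₀) + setSum d (S₀ \ X) := by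
      conv_lhs => rw [hS₀eq]
      rw [setSum_union_disjoint d hd4]
    have hX'sum : setSum d X' = setSum d (X ∩ Bs) + setSum d S₀ := by
      rw [hX'def, setSum_union_disjoint d hd1]
    -- abbreviations
    set a := (S₀ \ X).ncard with ha
    set b3 := (X \ (Bs ∪ S₀)).ncard with hb3
    set c2n := (X ∩ S₀).ncard with hc2n
    -- bag t decomposition
    have hbagt_card : (bag t).ncard = (bag t ∩ S₀).ncard + ((bag t) \ S₀).ncard := by
      conv_lhs => rw [show bag t = ((bag t ∩ S₀) ∪ ((bag t) \ S₀)) from (Set.inter_union_diff _ _).symm]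
      rw [Set.ncard_union_eq ?_ (Set.toFinite _) (Set.toFinite _)]
      rw [Set.disjoint_left]
      rintro z ⟨_, hz2⟩ ⟨_, hz3⟩
      exact hz3 hz2
    have hbt1 : (bag t ∩ S₀) ⊆ X ∩ S₀ := fun z hz => ⟨hbagtX hz.1, hz.2⟩
    have hbt2 : (bag t) \ S₀ ⊆ X \ (Bs ∪ S₀) := by
      rintro z ⟨hz1, hz2⟩
      refine ⟨hbagtX hz1, ?_⟩
      rintro (h | h)
      · exact hABdisj z (hbagtA z hz1 hz2) h
      · exact hz2 h
    have hbt1c : (bag t ∩ S₀).ncard ≤ c2n := Set.ncard_le_ncard hbt1 (Set.toFinite _)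
    have hbt2c : ((bag t) \ S₀).ncard ≤ b3 := Set.ncard_le_ncard hbt2 (Set.toFinite _)
    have hS₀le : S₀.ncard ≤ (bag t).ncard := by
      rcases hwit₀ with h | ⟨h, _⟩
      · exact le_of_lt h
      · exact le_of_eq h
    have hbtnonempty : ((bag t) \ S₀).Nonempty := by
      rw [Set.nonempty_iff_ne_empty]
      intro hemp
      have hsubS : bag t ⊆ S₀ := by
        intro z hz
        by_contra hzS
        exact (Set.eq_empty_iff_forall_notMem.1 hemp z) ⟨hz, hzS⟩
      have hble : (bag t).ncard ≤ S₀.ncard := Set.ncard_le_ncard hsubS (Set.toFinite _)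
      rcases hwit₀ with h | ⟨h, hlt⟩
      · omega
      · have heqset : bag t = S₀ := Set.eq_of_subset_of_ncard_le hsubS (le_of_eq h) (Set.toFinite _)
        rw [heqset] at hlt
        omega
    have hbt2pos : 0 < ((bag t) \ S₀).ncard :=
      (Set.ncard_pos (Set.toFinite _)).2 hbtnonempty
    have hchain : a + c2n ≤ c2n + b3 := by
      have h1 : a + c2n = S₀.ncard := by omega
      have h2 : S₀.ncard ≤ (bag t ∩ S₀).ncard + ((bag t) \ S₀).ncard := hbagt_card ▸ hS₀le
      omega
    have hale : a ≤ b3 := by omega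
    have hak : a ≤ k + 1 := by
      have h1 : a ≤ S₀.ncard := by omega
      have h2 : (bag t).ncard ≤ k + 1 := hwidth t
      omega
    have hDa : setSum d (S₀ \ X) ≤ a * nn := setSum_le_card_mul d _ (fun v => (hd v).2)
    have hD3 : b3 ≤ setSum d (X \ (Bs ∪ S₀)) := card_le_setSum d _ (fun v => (hd v).1)
    rcases Nat.lt_or_ge a b3 with hab | hab
    · -- strict decrease in cardinality
      have hgoal1 : X'.ncard * nn * (k+1) = ((X ∩ Bs).ncard + c2n + a) * nn * (k+1) := by
        rw [hX'card, hS₀card]; ring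
      have hgoal2 : X.ncard * nn * (k+1) = ((X ∩ Bs).ncard + c2n + b3) * nn * (k+1) := by
        rw [hXcard]; ring
      calc X'.ncard * nn * (k + 1) + setSum d X'
          = ((X ∩ Bs).ncard + c2n + a) * nn * (k + 1)
            + (setSum d (X ∩ Bs) + (setSum d (X ∩ S₀) + setSum d (S₀ \ X))) := by
            rw [hgoal1, hX'sum, hS₀sum]
        _ < ((X ∩ Bs).ncard + c2n + b3) * nn * (k + 1)
            + (setSum d (X ∩ Bs) + (setSum d (X ∩ S₀) + setSum d (X \ (Bs ∪ S₀)))) :=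
            arith_key nn k a b3 _ _ _ _ _ _ hDa hab hak hD3
        _ = X.ncard * nn * (k + 1) + setSum d X := by rw [hgoal2, hXsum]
    · -- equal cardinality, strict decrease in weight
      have haeq : a = b3 := le_antisymm hale hab
      have hwit₂ : S₀.ncard = (bag t).ncard ∧ setSum d S₀ < setSum d (bag t) := by
        rcases hwit₀ with h | h
        · exfalso
          have h2 : S₀.ncard < (bag t ∩ S₀).ncard + ((bag t) \ S₀).ncard := hbagt_card ▸ h
          omega
        · exact h
      obtain ⟨hceq, hsumlt⟩ := hwit₂
      have hbteq : (bag t ∩ S₀).ncard = c2n ∧ ((bag t) \ S₀).ncard = b3 := by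
        have h2 : S₀.ncard = (bag t ∩ S₀).ncard + ((bag t) \ S₀).ncard := hbagt_card ▸ hceq
        omega
      have hseteq1 : bag t ∩ S₀ = X ∩ S₀ :=
        Set.eq_of_subset_of_ncard_le hbt1 (by omega) (Set.toFinite _)
      have hseteq2 : (bag t) \ S₀ = X \ (Bs ∪ S₀) :=
        Set.eq_of_subset_of_ncard_le hbt2 (by omega) (Set.toFinite _)
      have hseteq3 : S₀ \ X = S₀ \ bag t := by
        ext z
        constructor
        · rintro ⟨hz1, hz2⟩
          exact ⟨hz1, fun h => hz2 (hbagtX h)⟩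
        · rintro ⟨hz1, hz2⟩
          refine ⟨hz1, fun hzX => ?_⟩
          have : z ∈ X ∩ S₀ := ⟨hzX, hz1⟩
          rw [← hseteq1] at this
          exact hz2 this.1
      have hbagt_sum : setSum d (bag t) = setSum d (bag t ∩ S₀) + setSum d ((bag t) \ S₀) := by
        conv_lhs => rw [show bag t = ((bag t ∩ S₀) ∪ ((bag t) \ S₀)) from (Set.inter_union_diff _ _).symm]
        rw [setSum_union_disjoint d ?_]
        rw [Set.disjoint_left]
        rintro z ⟨_, hz2⟩ ⟨_, hz3⟩
        exact hz3 hz2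
      have hS₀sum2 : setSum d S₀ = setSum d (bag t ∩ S₀) + setSum d (S₀ \ X) := by
        rw [hS₀sum, setSum_congr d hseteq1]
      have hDalt : setSum d (S₀ \ X) < setSum d (X \ (Bs ∪ S₀)) := by
        have h5 : setSum d ((bag t) \ S₀) = setSum d (X \ (Bs ∪ S₀)) := setSum_congr d hseteq2
        have h6 : setSum d (bag t ∩ S₀) = setSum d (X ∩ S₀) := setSum_congr d hseteq1
        omega
      have hgoal1 : X'.ncard = X.ncard := by
        rw [hX'card, hS₀card, hXcard]
        omega
      rw [hgoal1, hX'sum, hS₀sum, hXsum]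
      have hDsum2 : setSum d (X ∩ S₀) = setSum d (X ∩ S₀) := rfl
      omega
  exact ⟨ι, inferInstance, T, bag', X',
    ⟨hT.tree, hbs', hmem', hedge', hconn'⟩, hW_X', hwidth', le_rfl, harith⟩
end

section
/- Let G be a finite graph, A, B ⊆ V(G), and k an integer with k ≥ flow_G(A,B). Then the number of important (A,B)-separators of size at most k is at most k^{k − flow_G(A,B)}. -/
open SimpleGraph

variable {V ι : Type*}

namespace ImpSepProof

open SimpleGraph

set_option linter.unusedSectionVars false

variable {V : Type} [Fintype V]

/-! ### Basic lemmas about `reachG` -/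

lemma mem_reach_nil {G : SimpleGraph V} {A S : Set V} {x : V} (hx : x ∈ A) (hxs : x ∉ S) :
    x ∈ reachG G A S :=
  ⟨x, hx, hxs, SimpleGraph.Walk.nil, by simp [hxs]⟩

lemma not_mem_S_of_mem_reach {G : SimpleGraph V} {A S : Set V} {v : V}
    (hv : v ∈ reachG G A S) : v ∉ S := by
  obtain ⟨x, _, _, p, hp⟩ := hv
  exact hp v p.end_mem_support

lemma reach_append {G : SimpleGraph V} {A S : Set V} {v w : V}
    (hv : v ∈ reachG G A S) (p : G.Walk v w) (hp : ∀ u ∈ p.support, u ∉ S) :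
    w ∈ reachG G A S := by
  obtain ⟨x, hx, hxs, q, hq⟩ := hv
  refine ⟨x, hx, hxs, q.append p, ?_⟩
  intro u hu
  rw [SimpleGraph.Walk.mem_support_append_iff] at hu
  rcases hu with hu | hu
  · exact hq u hu
  · exact hp u hu

lemma reach_adj {G : SimpleGraph V} {A S : Set V} {v u : V}
    (hv : v ∈ reachG G A S) (h : G.Adj v u) (hu : u ∉ S) : u ∈ reachG G A S := by
  refine reach_append hv h.toWalk ?_
  intro w hw
  simp only [SimpleGraph.Walk.support_cons, SimpleGraph.Walk.support_nil,
    List.mem_cons, List.mem_singleton] at hw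
  rcases hw with rfl | hw
  · exact not_mem_S_of_mem_reach hv
  · rcases hw with rfl | h; · exact hu
    · exact absurd h (by simp)

lemma reach_mono_left {G : SimpleGraph V} {A A' S : Set V} (h : A ⊆ A') :
    reachG G A S ⊆ reachG G A' S := by
  rintro v ⟨x, hx, hxs, p, hp⟩
  exact ⟨x, h hx, hxs, p, hp⟩

lemma exists_walk_in_reach {G : SimpleGraph V} {A S : Set V} {v : V}
    (hv : v ∈ reachG G A S) :
    ∃ x ∈ A, x ∉ S ∧ ∃ p : G.Walk x v, ∀ w ∈ p.support, w ∈ reachG G A S := by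
  classical
  obtain ⟨x, hx, hxs, p, hp⟩ := hv
  refine ⟨x, hx, hxs, p, fun w hw => ?_⟩
  exact ⟨x, hx, hxs, p.takeUntil w hw,
    fun u hu => hp u (SimpleGraph.Walk.support_takeUntil_subset _ hw hu)⟩

lemma reach_subset_reach_of_disjoint {G : SimpleGraph V} {A S T : Set V}
    (h : ∀ u ∈ reachG G A S, u ∉ T) : reachG G A S ⊆ reachG G A T := by
  intro v hv
  obtain ⟨x, hx, hxs, p, hp⟩ := exists_walk_in_reach hv
  exact ⟨x, hx, h x (hp x p.start_mem_support), p, fun w hw => h w (hp w hw)⟩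

lemma reach_eq_of_between {G : SimpleGraph V} {A A' S : Set V} (hA : A ⊆ A')
    (h : A' ⊆ A ∪ reachG G A S) : reachG G A' S = reachG G A S := by
  refine Set.Subset.antisymm ?_ (reach_mono_left hA)
  rintro v ⟨x, hx, hxs, p, hp⟩
  rcases h hx with hx' | hx'
  · exact ⟨x, hx', hxs, p, hp⟩
  · exact reach_append hx' p hp

/-! ### Separators and reach -/

lemma not_mem_B_of_mem_reach {G : SimpleGraph V} {A B S : Set V} (hS : IsSep G A B S)
    {v : V} (hv : v ∈ reachG G A S) : v ∉ B := by
  intro hvB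
  obtain ⟨x, hx, hxs, p, hp⟩ := hv
  obtain ⟨s, hsS, hs⟩ := hS hx hvB p
  exact hp s hs hsS

lemma isSep_of_reach {G : SimpleGraph V} {A B S : Set V}
    (h : ∀ v ∈ reachG G A S, v ∉ B) : IsSep G A B S := by
  intro x y hx hy p
  by_contra hc
  push_neg at hc
  have hp : ∀ w ∈ p.support, w ∉ S := fun w hw hwS => hc w hwS hw
  have hxs : x ∉ S := hp x p.start_mem_support
  exact h y ⟨x, hx, hxs, p, hp⟩ hy

lemma isSep_mono_left {G : SimpleGraph V} {A A' B S : Set V} (h : A' ⊆ A)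
    (hS : IsSep G A B S) : IsSep G A' B S := fun _ _ hx hy p => hS (h hx) hy p

lemma isSep_mono_right {G : SimpleGraph V} {A B S S' : Set V} (h : S ⊆ S')
    (hS : IsSep G A B S) : IsSep G A B S' := by
  intro x y hx hy p
  obtain ⟨s, hsS, hs⟩ := hS hx hy p
  exact ⟨s, h hsS, hs⟩

lemma isSep_of_between {G : SimpleGraph V} {A A' B S : Set V} (hA : A ⊆ A')
    (hS : IsSep G A B S) (h : A' ⊆ A ∪ reachG G A S) : IsSep G A' B S := by
  refine isSep_of_reach fun v hv => ?_
  rw [reach_eq_of_between hA h] at hv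
  exact not_mem_B_of_mem_reach hS hv

/-! ### Submodularity -/

lemma sep_union_aux {G : SimpleGraph V} {A S1 S2 : Set V}
    {T : Set V} (hT : T = (S1 ∪ S2) \ (reachG G A S1 ∪ reachG G A S2)) :
    ∀ {x y : V} (p : G.Walk x y), (∀ u ∈ p.support, u ∉ T) →
      x ∈ reachG G A S1 ∪ reachG G A S2 → y ∈ reachG G A S1 ∪ reachG G A S2 := by
  have step : ∀ a b, a ∈ reachG G A S1 ∪ reachG G A S2 → G.Adj a b → b ∉ T →
      b ∈ reachG G A S1 ∪ reachG G A S2 := by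
    intro a b ha hab hbT
    by_cases hb : b ∈ S1 ∪ S2
    · subst hT
      rw [Set.mem_diff] at hbT
      push_neg at hbT
      exact hbT hb
    · rcases ha with ha | ha
      · exact Or.inl (reach_adj ha hab fun h => hb (Or.inl h))
      · exact Or.inr (reach_adj ha hab fun h => hb (Or.inr h))
  intro x y p
  induction p with
  | nil => exact fun _ h => h
  | @cons a b c h q ih =>
      intro hav hx
      refine ih (fun u hu => hav u ?_) (step a b hx h (hav b ?_))
      · rw [SimpleGraph.Walk.support_cons]; exact List.mem_cons_of_mem _ hu
      · rw [SimpleGraph.Walk.support_cons]; exact List.mem_cons_of_mem _ q.start_mem_support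

lemma sep_union {G : SimpleGraph V} {A B S1 S2 : Set V}
    (hS1 : IsSep G A B S1) (hS2 : IsSep G A B S2) :
    IsSep G A B ((S1 ∪ S2) \ (reachG G A S1 ∪ reachG G A S2)) := by
  set T := (S1 ∪ S2) \ (reachG G A S1 ∪ reachG G A S2) with hT
  refine isSep_of_reach fun v hv hvB => ?_
  obtain ⟨x, hx, hxT, p, hp⟩ := hv
  have hx' : x ∈ reachG G A S1 ∪ reachG G A S2 := by
    by_cases hxS : x ∈ S1 ∪ S2
    · rw [hT, Set.mem_diff] at hxT; push_neg at hxT; exact hxT hxS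
    · exact Or.inl (mem_reach_nil hx fun h => hxS (Or.inl h))
  have hv' := sep_union_aux hT p hp hx'
  rcases hv' with h | h
  · exact not_mem_B_of_mem_reach hS1 h hvB
  · exact not_mem_B_of_mem_reach hS2 h hvB

lemma reach_union_subset {G : SimpleGraph V} {A S1 S2 : Set V} :
    reachG G A S1 ∪ reachG G A S2 ⊆
      reachG G A ((S1 ∪ S2) \ (reachG G A S1 ∪ reachG G A S2)) := by
  intro v hv
  rcases hv with h | h
  · exact reach_subset_reach_of_disjoint
      (fun u hu hT => hT.2 (Or.inl hu)) h
  · exact reach_subset_reach_of_disjoint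
      (fun u hu hT => hT.2 (Or.inr hu)) h

lemma sep_inter {G : SimpleGraph V} {A B S1 S2 : Set V}
    (hS1 : IsSep G A B S1) (hS2 : IsSep G A B S2) :
    IsSep G A B ((S1 ∩ reachG G A S2) ∪ (S1 ∩ S2) ∪ (S2 ∩ reachG G A S1)) := by
  set R1 := reachG G A S1 with hR1
  set R2 := reachG G A S2 with hR2
  set T := (S1 ∩ R2) ∪ (S1 ∩ S2) ∪ (S2 ∩ R1) with hT
  have step : ∀ a b, a ∈ R1 ∩ R2 → G.Adj a b → b ∉ T → b ∈ R1 ∩ R2 := by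
    intro a b ha hab hbT
    have hb1 : b ∉ S1 := by
      intro hbS1
      by_cases hbS2 : b ∈ S2
      · exact hbT (Or.inl (Or.inr ⟨hbS1, hbS2⟩))
      · exact hbT (Or.inl (Or.inl ⟨hbS1, reach_adj ha.2 hab hbS2⟩))
    have hb2 : b ∉ S2 := by
      intro hbS2
      exact hbT (Or.inr ⟨hbS2, reach_adj ha.1 hab hb1⟩)
    exact ⟨reach_adj ha.1 hab hb1, reach_adj ha.2 hab hb2⟩
  have aux : ∀ {x y : V} (p : G.Walk x y), (∀ u ∈ p.support, u ∉ T) →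
      x ∈ R1 ∩ R2 → y ∈ R1 ∩ R2 := by
    intro x y p
    induction p with
    | nil => exact fun _ h => h
    | @cons a b c h q ih =>
        intro hav hx
        refine ih (fun u hu => hav u ?_) (step a b hx h (hav b ?_))
        · rw [SimpleGraph.Walk.support_cons]; exact List.mem_cons_of_mem _ hu
        · rw [SimpleGraph.Walk.support_cons]; exact List.mem_cons_of_mem _ q.start_mem_support
  refine isSep_of_reach fun v hv hvB => ?_
  obtain ⟨x, hx, hxT, p, hp⟩ := hv
  have hx1 : x ∉ S1 := by
    intro hxS1
    by_cases hxS2 : x ∈ S2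
    · exact hxT (Or.inl (Or.inr ⟨hxS1, hxS2⟩))
    · exact hxT (Or.inl (Or.inl ⟨hxS1, mem_reach_nil hx hxS2⟩))
  have hx2 : x ∉ S2 := by
    intro hxS2
    exact hxT (Or.inr ⟨hxS2, mem_reach_nil hx hx1⟩)
  have := aux p hp ⟨mem_reach_nil hx hx1, mem_reach_nil hx hx2⟩
  exact not_mem_B_of_mem_reach hS1 this.1 hvB

lemma ncard_submod {S1 S2 T T' : Set V} (h1 : T ⊆ S1 ∪ S2) (h2 : T' ⊆ S1 ∪ S2)
    (h3 : T ∩ T' ⊆ S1 ∩ S2) : T.ncard + T'.ncard ≤ S1.ncard + S2.ncard := by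
  have e1 := Set.ncard_union_add_ncard_inter T T' (Set.toFinite T) (Set.toFinite T')
  have e2 := Set.ncard_union_add_ncard_inter S1 S2 (Set.toFinite S1) (Set.toFinite S2)
  have l1 : (T ∪ T').ncard ≤ (S1 ∪ S2).ncard :=
    Set.ncard_le_ncard (Set.union_subset h1 h2) (Set.toFinite _)
  have l2 : (T ∩ T').ncard ≤ (S1 ∩ S2).ncard :=
    Set.ncard_le_ncard h3 (Set.toFinite _)
  omega

/-! ### Minimal separators -/

lemma exists_minimal_subset {G : SimpleGraph V} {A B S : Set V} (h : IsSep G A B S) :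
    ∃ T, T ⊆ S ∧ IsMinimalSep G A B T := by
  have key : ∀ n (S : Set V), S.ncard ≤ n → IsSep G A B S →
      ∃ T, T ⊆ S ∧ IsMinimalSep G A B T := by
    intro n
    induction n with
    | zero =>
        intro S hn hS
        refine ⟨S, Set.Subset.rfl, hS, fun S' hss _ => ?_⟩
        have := Set.ncard_lt_ncard hss (Set.toFinite S)
        omega
    | succ n ih =>
        intro S hn hS
        by_cases hmin : ∀ S' ⊂ S, ¬ IsSep G A B S'
        · exact ⟨S, Set.Subset.rfl, hS, hmin⟩
        · push_neg at hmin
          obtain ⟨S', hss, hS'⟩ := hmin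
          have := Set.ncard_lt_ncard hss (Set.toFinite S)
          obtain ⟨T, hT, hTm⟩ := ih S' (by omega) hS'
          exact ⟨T, hT.trans hss.subset, hTm⟩
  exact key S.ncard S le_rfl h

lemma minimal_sep_structure {G : SimpleGraph V} {A B S : Set V}
    (hS : IsMinimalSep G A B S) {s : V} (hs : s ∈ S) :
    s ∈ A ∨ ∃ u ∈ reachG G A S, G.Adj u s := by
  classical
  have hns : ¬ IsSep G A B (S \ {s}) :=
    hS.2 _ (Set.sdiff_singleton_ssubset.mpr hs)
  unfold IsSep at hns
  push_neg at hns
  obtain ⟨x, y, hx, hy, p, hp⟩ := hns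
  have hsup : ∀ u ∈ p.support, u ∈ S → u = s := by
    intro u hu huS
    by_contra hne
    exact hp u ⟨huS, hne⟩ hu
  have hsp : s ∈ p.support := by
    obtain ⟨t, htS, ht⟩ := hS.1 hx hy p
    have := hsup t ht htS
    rwa [this] at ht
  by_cases hxs : x = s
  · left; rwa [← hxs]
  · right
    set q := p.takeUntil s hsp with hqdef
    have hcount : q.support.count s = 1 := p.count_support_takeUntil_eq_one hsp
    obtain ⟨u, hadj, r, hqr⟩ :=
      SimpleGraph.Walk.exists_eq_cons_of_ne (Ne.symm hxs) q.reverse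
    have hsr : s ∉ r.support := by
      have hc : q.reverse.support.count s = 1 := by
        rw [SimpleGraph.Walk.support_reverse, List.count_reverse]
        exact hcount
      rw [hqr, SimpleGraph.Walk.support_cons, List.count_cons_self] at hc
      have : r.support.count s = 0 := by omega
      exact List.count_eq_zero.mp this
    have hrsub : ∀ w ∈ r.support, w ∈ p.support := by
      intro w hw
      have h1 : w ∈ q.reverse.support := by
        rw [hqr, SimpleGraph.Walk.support_cons]
        exact List.mem_cons_of_mem _ hw
      rw [SimpleGraph.Walk.support_reverse, List.mem_reverse] at h1
      exact p.support_takeUntil_subset hsp h1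
    have havoid : ∀ w ∈ r.reverse.support, w ∉ S := by
      intro w hw hwS
      rw [SimpleGraph.Walk.support_reverse, List.mem_reverse] at hw
      have := hsup w (hrsub w hw) hwS
      subst this
      exact hsr hw
    have hxr : x ∈ r.reverse.support := r.reverse.start_mem_support
    exact ⟨u, ⟨x, hx, havoid x hxr, r.reverse, havoid⟩, hadj.symm⟩

/-! ### Escape walks -/

lemma exists_escape_walk {G : SimpleGraph V} {A B S : Set V}
    (hS : IsMinimalSep G A B S) {v : V} (hv : v ∈ S) :
    ∃ y ∈ B, ∃ q : G.Walk v y, (∀ u ∈ q.support, u ∈ S → u = v) ∧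
      (∀ u ∈ q.support, u ≠ v → u ∉ reachG G A S) := by
  classical
  have hns : ¬ IsSep G A B (S \ {v}) :=
    hS.2 _ (Set.sdiff_singleton_ssubset.mpr hv)
  unfold IsSep at hns
  push_neg at hns
  obtain ⟨x, y, hx, hy, p, hp⟩ := hns
  have hsup : ∀ u ∈ p.support, u ∈ S → u = v := by
    intro u hu huS
    by_contra hne
    exact hp u ⟨huS, hne⟩ hu
  have hvp : v ∈ p.support := by
    obtain ⟨t, htS, ht⟩ := hS.1 hx hy p
    have := hsup t ht htS
    rwa [this] at ht
  have hv' : v ∈ p.reverse.support := by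
    rw [SimpleGraph.Walk.support_reverse, List.mem_reverse]; exact hvp
  set q := (p.reverse.takeUntil v hv').reverse with hqdef
  have hcount : q.support.count v = 1 := by
    rw [hqdef, SimpleGraph.Walk.support_reverse, List.count_reverse]
    exact p.reverse.count_support_takeUntil_eq_one hv'
  have hqsub : ∀ u ∈ q.support, u ∈ p.support := by
    intro u hu
    rw [hqdef, SimpleGraph.Walk.support_reverse, List.mem_reverse] at hu
    have := p.reverse.support_takeUntil_subset hv' hu
    rw [SimpleGraph.Walk.support_reverse, List.mem_reverse] at this
    exact this
  have prop1 : ∀ u ∈ q.support, u ∈ S → u = v := fun u hu => hsup u (hqsub u hu)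
  have main : ∀ (y' : V), y' ∈ B → ∀ (q' : G.Walk v y'),
      (∀ u ∈ q'.support, u ∈ S → u = v) → q'.support.count v = 1 →
      ∀ u ∈ q'.support, u ≠ v → u ∉ reachG G A S := by
    intro y' hy' q'
    cases q' with
    | nil =>
        intro _ _ u hu hne
        rw [SimpleGraph.Walk.support_nil, List.mem_singleton] at hu
        exact absurd hu hne
    | @cons _ w _ hadj r =>
        intro hp1 hc1 u hu hne hureach
        have hvr : v ∉ r.support := by
          rw [SimpleGraph.Walk.support_cons, List.count_cons_self] at hc1
          exact List.count_eq_zero.mp (by omega)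
        have hur : u ∈ r.support := by
          rw [SimpleGraph.Walk.support_cons, List.mem_cons] at hu
          rcases hu with rfl | hu
          · exact absurd rfl hne
          · exact hu
        have ravoid : ∀ w' ∈ r.support, w' ∉ S := by
          intro w' hw' hw'S
          have := hp1 w' (by
            rw [SimpleGraph.Walk.support_cons]; exact List.mem_cons_of_mem _ hw') hw'S
          subst this
          exact hvr hw'
        have hyreach : y' ∈ reachG G A S :=
          reach_append hureach (r.dropUntil u hur)
            (fun w' hw' => ravoid w' (r.support_dropUntil_subset hur hw'))
        exact not_mem_B_of_mem_reach hS.1 hyreach hy'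
  exact ⟨y, hy, q, prop1, main y hy q prop1 hcount⟩

/-! ### Relative flow and the pushed minimum separator -/

lemma reach_anti {G : SimpleGraph V} {A S S' : Set V} (h : S ⊆ S') :
    reachG G A S' ⊆ reachG G A S := by
  rintro v ⟨x, hx, hxs, p, hp⟩
  exact ⟨x, hx, fun hc => hxs (h hc), p, fun w hw hc => hp w hw (h hc)⟩

noncomputable def flowRel (G : SimpleGraph V) (A B F : Set V) : ℕ :=
  sInf (Set.ncard '' {S : Set V | IsSep G A B S ∧ S ∩ F = ∅})

lemma flowRel_le {G : SimpleGraph V} {A B F S : Set V} (hS : IsSep G A B S)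
    (hF : S ∩ F = ∅) : flowRel G A B F ≤ S.ncard :=
  Nat.sInf_le ⟨S, ⟨hS, hF⟩, rfl⟩

lemma flowRel_empty (G : SimpleGraph V) (A B : Set V) :
    flowRel G A B ∅ = flowG G A B := by
  unfold flowRel flowG
  congr 1
  ext n
  simp [Set.inter_empty]

lemma exists_Sstar (G : SimpleGraph V) (A B F : Set V)
    (hne : ∃ S, IsSep G A B S ∧ S ∩ F = ∅) :
    ∃ S', IsMinimalSep G A B S' ∧ S' ∩ F = ∅ ∧ S'.ncard = flowRel G A B F ∧
      ∀ T, IsSep G A B T → T ∩ F = ∅ → T.ncard = flowRel G A B F →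
        reachG G A T ⊆ reachG G A S' := by
  classical
  set lam := flowRel G A B F with hlam
  have hne' : (Set.ncard '' {S : Set V | IsSep G A B S ∧ S ∩ F = ∅}).Nonempty := by
    obtain ⟨S, hS⟩ := hne
    exact ⟨S.ncard, S, hS, rfl⟩
  obtain ⟨T₁, hT₁, hT₁c⟩ := Nat.sInf_mem hne'
  set Tfam := {T : Set V | IsSep G A B T ∧ T ∩ F = ∅ ∧ T.ncard = lam} with hTfam
  have hT₁mem : T₁ ∈ Tfam := ⟨hT₁.1, hT₁.2, hT₁c⟩
  set RN := (fun T => (reachG G A T).ncard) '' Tfam with hRN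
  have hRNne : RN.Nonempty := ⟨_, T₁, hT₁mem, rfl⟩
  have hbdd : BddAbove RN := by
    refine ⟨Fintype.card V, ?_⟩
    rintro n ⟨T, _, rfl⟩
    calc (reachG G A T).ncard ≤ (Set.univ : Set V).ncard :=
          Set.ncard_le_ncard (Set.subset_univ _) Set.finite_univ
      _ = Fintype.card V := by rw [Set.ncard_univ, Nat.card_eq_fintype_card]
  set m := sSup RN with hm
  obtain ⟨T₀, hT₀mem, hT₀m⟩ := Nat.sSup_mem hRNne hbdd
  have hmax : ∀ T ∈ Tfam, (reachG G A T).ncard ≤ m :=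
    fun T hT => le_csSup hbdd ⟨T, hT, rfl⟩
  obtain ⟨S', hsub, hS'min⟩ := exists_minimal_subset hT₀mem.1
  have hS'F : S' ∩ F = ∅ := by
    rw [← Set.subset_empty_iff, ← hT₀mem.2.1]
    exact Set.inter_subset_inter_left _ hsub
  have hS'c : S'.ncard = lam := by
    have h1 : lam ≤ S'.ncard := flowRel_le hS'min.1 hS'F
    have h2 : S'.ncard ≤ T₀.ncard := Set.ncard_le_ncard hsub (Set.toFinite _)
    have h2 : S'.ncard ≤ T₀.ncard := Set.ncard_le_ncard hsub (Set.toFinite _)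
    rw [hT₀mem.2.2] at h2
    omega
  have hS'mem : S' ∈ Tfam := ⟨hS'min.1, hS'F, hS'c⟩
  have hreachT₀ : reachG G A T₀ ⊆ reachG G A S' := reach_anti hsub
  have hS'm : (reachG G A S').ncard = m := by
    have h1 : (reachG G A S').ncard ≤ m := hmax S' hS'mem
    have hT₀m' : (reachG G A T₀).ncard = m := hT₀m
    have h2 : m ≤ (reachG G A S').ncard := by
      rw [← hT₀m']
      exact Set.ncard_le_ncard hreachT₀ (Set.toFinite _)
    omega
  refine ⟨S', hS'min, hS'F, hS'c, ?_⟩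
  intro T hT hTF hTc
  set U := (T ∪ S') \ (reachG G A T ∪ reachG G A S') with hU
  set I := (T ∩ reachG G A S') ∪ (T ∩ S') ∪ (S' ∩ reachG G A T) with hI
  have hsepU : IsSep G A B U := sep_union hT hS'min.1
  have hreachU : reachG G A T ∪ reachG G A S' ⊆ reachG G A U := reach_union_subset
  have hsepI : IsSep G A B I := sep_inter hT hS'min.1
  have hIsub : I ⊆ T ∪ S' := by
    rintro u ((⟨h1, _⟩ | ⟨h1, _⟩) | ⟨h1, _⟩)
    · exact Or.inl h1
    · exact Or.inl h1
    · exact Or.inr h1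
  have hTS'F : (T ∪ S') ∩ F = ∅ := by
    rw [Set.union_inter_distrib_right, hTF, hS'F, Set.union_empty]
  have hIF : I ∩ F = ∅ := by
    rw [← Set.subset_empty_iff, ← hTS'F]
    exact Set.inter_subset_inter_left _ hIsub
  have hIle : lam ≤ I.ncard := flowRel_le hsepI hIF
  have hUI : U ∩ I ⊆ T ∩ S' := by
    rintro u ⟨hu1, hu2⟩
    rcases hu2 with (⟨_, h2⟩ | h) | ⟨_, h2⟩
    · exact absurd (Or.inr h2) hu1.2
    · exact h
    · exact absurd (Or.inl h2) hu1.2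
  have hsubmod : U.ncard + I.ncard ≤ T.ncard + S'.ncard :=
    ncard_submod Set.diff_subset hIsub hUI
  have hUle : U.ncard ≤ lam := by
    rw [hTc, hS'c] at hsubmod
    omega
  have hUF : U ∩ F = ∅ := by
    rw [← Set.subset_empty_iff, ← hTS'F]
    exact Set.inter_subset_inter_left _ Set.diff_subset
  have hUc : U.ncard = lam := le_antisymm hUle (flowRel_le hsepU hUF)
  have hUmem : U ∈ Tfam := ⟨hsepU, hUF, hUc⟩
  have hS'U : reachG G A S' ⊆ reachG G A U := fun v hv => hreachU (Or.inr hv)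
  have heq : reachG G A S' = reachG G A U := by
    refine Set.eq_of_subset_of_ncard_le hS'U ?_ (Set.toFinite _)
    rw [hS'm]
    exact hmax U hUmem
  rw [heq] at hS'U ⊢
  exact fun v hv => hreachU (Or.inl hv)

/-! ### The counted family -/

def Cfam (G : SimpleGraph V) (A₀ B : Set V) (k : ℕ) (A F : Set V) : Set (Set V) :=
  {S | IsImportantSep G A₀ B S ∧ S.ncard ≤ k ∧ S ∩ F = ∅ ∧ A ⊆ A₀ ∪ reachG G A₀ S}

section NodeLemmas

variable {G : SimpleGraph V} {A₀ B : Set V} {k : ℕ} {A F : Set V}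

lemma Cfam_sep₀ {S : Set V} (hS : S ∈ Cfam G A₀ B k A F) : IsSep G A₀ B S :=
  hS.1.1.1

lemma Cfam_reach_eq {S : Set V} (hA : A₀ ⊆ A) (hS : S ∈ Cfam G A₀ B k A F) :
    reachG G A S = reachG G A₀ S :=
  reach_eq_of_between hA hS.2.2.2

lemma Cfam_sepA {S : Set V} (hA : A₀ ⊆ A) (hS : S ∈ Cfam G A₀ B k A F) :
    IsSep G A B S :=
  isSep_of_between hA (Cfam_sep₀ hS) hS.2.2.2

lemma Cfam_minA {S : Set V} (hA : A₀ ⊆ A) (hS : S ∈ Cfam G A₀ B k A F) :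
    IsMinimalSep G A B S :=
  ⟨Cfam_sepA hA hS, fun S' hss hS' => hS.1.1.2 S' hss (isSep_mono_left hA hS')⟩

/-- The key lemma: the reach of the pushed minimum separator is contained in the reach of
every important separator. -/
lemma key_reach {Sstar S : Set V} (hA : A₀ ⊆ A)
    (hminstar : IsMinimalSep G A B Sstar) (hstarF : Sstar ∩ F = ∅)
    (hstarc : Sstar.ncard = flowRel G A B F)
    (hS : S ∈ Cfam G A₀ B k A F) :
    reachG G A Sstar ⊆ reachG G A S := by
  by_contra hred
  rw [Set.not_subset] at hred
  obtain ⟨v, hvstar, hvS⟩ := hred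
  set Rstar := reachG G A Sstar with hRstar
  set RS := reachG G A S with hRS
  set T := (Sstar ∪ S) \ (Rstar ∪ RS) with hT
  have hsepA := (Cfam_sepA hA hS)
  have hTsep : IsSep G A B T := sep_union hminstar.1 hsepA
  have hreachT : Rstar ∪ RS ⊆ reachG G A T := reach_union_subset
  set I := (Sstar ∩ RS) ∪ (Sstar ∩ S) ∪ (S ∩ Rstar) with hI
  have hsepI : IsSep G A B I := sep_inter hminstar.1 hsepA
  have hIsub : I ⊆ Sstar ∪ S := by
    rintro u ((⟨h1, _⟩ | ⟨h1, _⟩) | ⟨h1, _⟩)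
    · exact Or.inl h1
    · exact Or.inl h1
    · exact Or.inr h1
  have hIF : I ∩ F = ∅ := by
    apply Set.eq_empty_iff_forall_notMem.mpr
    rintro u ⟨hu1, hu2⟩
    rcases hIsub hu1 with h | h
    · exact (Set.eq_empty_iff_forall_notMem.mp hstarF u) ⟨h, hu2⟩
    · exact (Set.eq_empty_iff_forall_notMem.mp hS.2.2.1 u) ⟨h, hu2⟩
  have hIle : flowRel G A B F ≤ I.ncard := flowRel_le hsepI hIF
  have hUI : T ∩ I ⊆ Sstar ∩ S := by
    rintro u ⟨hu1, hu2⟩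
    rcases hu2 with (⟨_, h2⟩ | h) | ⟨_, h2⟩
    · exact absurd (Or.inr h2) hu1.2
    · exact h
    · exact absurd (Or.inl h2) hu1.2
  have hsubmod : T.ncard + I.ncard ≤ Sstar.ncard + S.ncard :=
    ncard_submod Set.diff_subset hIsub hUI
  have hTle : T.ncard ≤ S.ncard := by
    rw [hstarc] at hsubmod
    omega
  -- now contradict the importance of S
  have hTsep₀ : IsSep G A₀ B T := isSep_mono_left hA hTsep
  have hreq : RS = reachG G A₀ S := (Cfam_reach_eq hA hS)
  have hRS_T : reachG G A₀ S ⊆ reachG G A₀ T := by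
    refine reach_subset_reach_of_disjoint fun u hu huT => ?_
    rw [← hreq] at hu
    exact huT.2 (Or.inr hu)
  have hAT : A ⊆ A₀ ∪ reachG G A₀ T :=
    hS.2.2.2.trans (Set.union_subset_union_right _ hRS_T)
  have hreqT : reachG G A T = reachG G A₀ T := reach_eq_of_between hA hAT
  have hvT : v ∈ reachG G A₀ T := by
    rw [← hreqT]
    exact hreachT (Or.inl hvstar)
  have hvS' : v ∉ reachG G A₀ S := by rwa [← hreq]
  refine hS.1.2 ⟨T, hTsep₀, hTle, ?_⟩
  refine ⟨hreq ▸ hRS_T, fun hcon => hvS' (hcon hvT)⟩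

/-- Uniqueness of the minimum-size member. -/
lemma node_unique {Sstar S : Set V} (hA : A₀ ⊆ A)
    (hminstar : IsMinimalSep G A B Sstar) (hstarF : Sstar ∩ F = ∅)
    (hstarc : Sstar.ncard = flowRel G A B F)
    (hmax : ∀ T, IsSep G A B T → T ∩ F = ∅ → T.ncard = flowRel G A B F →
      reachG G A T ⊆ reachG G A Sstar)
    (hS : S ∈ Cfam G A₀ B k A F) (hc : S.ncard = flowRel G A B F) : S = Sstar := by
  have hkey : reachG G A Sstar ⊆ reachG G A S := key_reach hA hminstar hstarF hstarc hS
  have hrev : reachG G A S ⊆ reachG G A Sstar := hmax S ((Cfam_sepA hA hS)) hS.2.2.1 hc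
  have heqR : reachG G A S = reachG G A Sstar := Set.Subset.antisymm hrev hkey
  have hsub : S ⊆ Sstar := by
    intro s hsS
    rcases minimal_sep_structure ((Cfam_minA hA hS)) hsS with hsA | ⟨u, huR, hadj⟩
    · by_contra hsstar
      exact not_mem_S_of_mem_reach (heqR ▸ mem_reach_nil hsA hsstar) hsS
    · by_contra hsstar
      have : s ∈ reachG G A Sstar := reach_adj (heqR ▸ huR) hadj hsstar
      exact not_mem_S_of_mem_reach (heqR ▸ this) hsS
  by_contra hne
  exact hminstar.2 S (Set.ssubset_iff_subset_ne.mpr ⟨hsub, hne⟩) ((Cfam_sepA hA hS))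

/-- Branching: a non-pushed important separator has a vertex of `Sstar` in its reach. -/
lemma node_branch {Sstar S : Set V} (hA : A₀ ⊆ A)
    (hminstar : IsMinimalSep G A B Sstar) (hstarF : Sstar ∩ F = ∅)
    (hstarc : Sstar.ncard = flowRel G A B F)
    (hS : S ∈ Cfam G A₀ B k A F) (hne : S ≠ Sstar) :
    ∃ v ∈ Sstar, v ∈ reachG G A S := by
  by_contra hcon
  push_neg at hcon
  have hkey : reachG G A Sstar ⊆ reachG G A S := key_reach hA hminstar hstarF hstarc hS
  have hsub : Sstar ⊆ S := by
    intro s hs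
    rcases minimal_sep_structure hminstar hs with hsA | ⟨u, huR, hadj⟩
    · by_contra hsS
      exact hcon s hs (mem_reach_nil hsA hsS)
    · by_contra hsS
      exact hcon s hs (reach_adj (hkey huR) hadj hsS)
  rcases Set.eq_or_ssubset_of_subset hsub with heq | hss
  · exact hne heq.symm
  · exact hS.1.1.2 Sstar hss (isSep_mono_left hA hminstar.1)

/-- The flow strictly increases at a branching step. -/
lemma node_jump {Sstar : Set V} (hminstar : IsMinimalSep G A B Sstar)
    (hmax : ∀ T, IsSep G A B T → T ∩ F = ∅ → T.ncard = flowRel G A B F →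
      reachG G A T ⊆ reachG G A Sstar)
    {v : V} (hv : v ∈ Sstar) :
    ∀ T, IsSep G (A ∪ reachG G A Sstar ∪ {v}) B T → T ∩ (insert v F) = ∅ →
      flowRel G A B F + 1 ≤ T.ncard := by
  intro T hT hTF
  set lam := flowRel G A B F with hlam
  have hsubA : A ⊆ A ∪ reachG G A Sstar ∪ {v} := fun a ha => Or.inl (Or.inl ha)
  have hTA : IsSep G A B T := isSep_mono_left hsubA hT
  have hTFsub : T ∩ F = ∅ := by
    apply Set.eq_empty_iff_forall_notMem.mpr
    rintro u ⟨h1, h2⟩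
    exact (Set.eq_empty_iff_forall_notMem.mp hTF u) ⟨h1, Set.mem_insert_of_mem _ h2⟩
  have hlamle : lam ≤ T.ncard := flowRel_le hTA hTFsub
  by_contra hlt
  push_neg at hlt
  have hTc : T.ncard = lam := by omega
  have hTmin : IsMinimalSep G A B T := by
    refine ⟨hTA, fun T' hss hT' => ?_⟩
    have h1 := Set.ncard_lt_ncard hss (Set.toFinite T)
    have h2 : T' ∩ F = ∅ := by
      apply Set.eq_empty_iff_forall_notMem.mpr
      rintro u ⟨a, b⟩
      exact (Set.eq_empty_iff_forall_notMem.mp hTFsub u) ⟨hss.subset a, b⟩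
    have := flowRel_le hT' h2
    omega
  have hreachT : reachG G A T ⊆ reachG G A Sstar := hmax T hTA hTFsub hTc
  have hTsub : T ⊆ A ∪ reachG G A Sstar ∪ Sstar := by
    intro t ht
    rcases minimal_sep_structure hTmin ht with htA | ⟨u, huR, hadj⟩
    · exact Or.inl (Or.inl htA)
    · by_cases htstar : t ∈ Sstar
      · exact Or.inr htstar
      · exact Or.inl (Or.inr (reach_adj (hreachT huR) hadj htstar))
  obtain ⟨y, hy, q, hq1, hq2⟩ := exists_escape_walk hminstar hv
  have hvT : v ∉ T := by
    intro hc
    have : v ∈ T ∩ insert v F := ⟨hc, Set.mem_insert _ _⟩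
    rw [hTF] at this
    exact this
  have hqT : ∀ u ∈ q.support, u ∉ T := by
    intro u hu huT
    by_cases huv : u = v
    · exact hvT (huv ▸ huT)
    · have h1 : u ∉ Sstar := fun hc => huv (hq1 u hu hc)
      have h2 : u ∉ reachG G A Sstar := hq2 u hu huv
      rcases hTsub huT with (huA | huR) | huS
      · exact h2 (mem_reach_nil huA h1)
      · exact h2 huR
      · exact h1 huS
  obtain ⟨s, hsT, hss⟩ := hT (Or.inr rfl) hy q
  exact hqT s hss hsT

end NodeLemmas

/-! ### Counting -/

lemma ncard_biUnion_le {α β : Type*} [Finite β] (t : Finset α) (f : α → Set β) :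
    (⋃ a ∈ t, f a).ncard ≤ ∑ a ∈ t, (f a).ncard := by
  classical
  induction t using Finset.induction_on with
  | empty => simp
  | @insert a s ha ih =>
      rw [Finset.set_biUnion_insert, Finset.sum_insert ha]
      exact le_trans (Set.ncard_union_le _ _)
        (Nat.add_le_add_left ih _)

lemma main (G : SimpleGraph V) (A₀ B : Set V) (k : ℕ) :
    ∀ (d : ℕ) (A F : Set V), A₀ ⊆ A →
      ((Cfam G A₀ B k A F).Nonempty → k ≤ flowRel G A B F + d) →
      (d = 0 ∨ 1 ≤ k) →
      (Cfam G A₀ B k A F).ncard ≤ k ^ d := by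
  intro d
  induction d with
  | zero =>
      intro A F hA hcond _
      by_cases hne : (Cfam G A₀ B k A F).Nonempty
      swap
      · rw [Set.not_nonempty_iff_eq_empty] at hne
        simp [hne]
      have hk := hcond hne
      obtain ⟨S₀, hS₀⟩ := hne
      have hex : ∃ S, IsSep G A B S ∧ S ∩ F = ∅ := ⟨S₀, Cfam_sepA hA hS₀, hS₀.2.2.1⟩
      obtain ⟨Sstar, hminstar, hstarF, hstarc, hmax⟩ := exists_Sstar G A B F hex
      have hsub : Cfam G A₀ B k A F ⊆ {Sstar} := by
        intro S hS
        have h1 : flowRel G A B F ≤ S.ncard := flowRel_le (Cfam_sepA hA hS) hS.2.2.1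
        have h2 : S.ncard ≤ k := hS.2.1
        have hc : S.ncard = flowRel G A B F := by omega
        exact node_unique hA hminstar hstarF hstarc hmax hS hc
      calc (Cfam G A₀ B k A F).ncard ≤ ({Sstar} : Set (Set V)).ncard :=
            Set.ncard_le_ncard hsub (Set.toFinite _)
        _ = 1 := Set.ncard_singleton _
        _ = k ^ 0 := (pow_zero k).symm
  | succ d ih =>
      intro A F hA hcond hk1
      by_cases hne : (Cfam G A₀ B k A F).Nonempty
      swap
      · rw [Set.not_nonempty_iff_eq_empty] at hne
        simp [hne]
      have hk := hcond hne
      have hk1' : 1 ≤ k := by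
        rcases hk1 with h | h
        · exact absurd h (Nat.succ_ne_zero d)
        · exact h
      obtain ⟨S₀, hS₀⟩ := hne
      have hex : ∃ S, IsSep G A B S ∧ S ∩ F = ∅ := ⟨S₀, Cfam_sepA hA hS₀, hS₀.2.2.1⟩
      obtain ⟨Sstar, hminstar, hstarF, hstarc, hmax⟩ := exists_Sstar G A B F hex
      by_cases hlam : k ≤ flowRel G A B F
      · -- all members equal Sstar
        have hsub : Cfam G A₀ B k A F ⊆ {Sstar} := by
          intro S hS
          have h1 : flowRel G A B F ≤ S.ncard := flowRel_le (Cfam_sepA hA hS) hS.2.2.1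
          have h2 : S.ncard ≤ k := hS.2.1
          have hc : S.ncard = flowRel G A B F := by omega
          exact node_unique hA hminstar hstarF hstarc hmax hS hc
        have h1 : 0 < k ^ (d + 1) := pow_pos (by omega) _
        calc (Cfam G A₀ B k A F).ncard ≤ ({Sstar} : Set (Set V)).ncard :=
              Set.ncard_le_ncard hsub (Set.toFinite _)
          _ = 1 := Set.ncard_singleton _
          _ ≤ k ^ (d + 1) := h1
      · push_neg at hlam
        set lam := flowRel G A B F with hlamdef
        have hgoalsub : Cfam G A₀ B k A F ⊆
            insert Sstar (⋃ v ∈ Sstar,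
              Cfam G A₀ B k (A ∪ reachG G A Sstar ∪ {v}) (insert v F)) := by
          intro S hS
          by_cases hSeq : S = Sstar
          · subst hSeq; exact Set.mem_insert _ _
          · obtain ⟨v, hvstar, hvR⟩ := node_branch hA hminstar hstarF hstarc hS hSeq
            refine Set.mem_insert_of_mem _ (Set.mem_biUnion hvstar ?_)
            have hre : reachG G A S = reachG G A₀ S := Cfam_reach_eq hA hS
            have hkey := key_reach hA hminstar hstarF hstarc hS
            refine ⟨hS.1, hS.2.1, ?_, ?_⟩
            · apply Set.eq_empty_iff_forall_notMem.mpr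
              rintro u ⟨h1, h2⟩
              rcases Set.mem_insert_iff.mp h2 with rfl | h2
              · exact not_mem_S_of_mem_reach hvR h1
              · exact Set.eq_empty_iff_forall_notMem.mp hS.2.2.1 u ⟨h1, h2⟩
            · intro a ha
              rcases ha with (ha | ha) | ha
              · exact hS.2.2.2 ha
              · exact Or.inr (hre ▸ hkey ha)
              · rw [Set.mem_singleton_iff] at ha
                subst ha
                exact Or.inr (hre ▸ hvR)
        have hterm : ∀ v ∈ Sstar,
            (Cfam G A₀ B k (A ∪ reachG G A Sstar ∪ {v}) (insert v F)).ncard ≤ k ^ d := by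
          intro v hv
          have hA' : A₀ ⊆ A ∪ reachG G A Sstar ∪ {v} :=
            hA.trans (fun a ha => Or.inl (Or.inl ha))
          refine ih (A ∪ reachG G A Sstar ∪ {v}) (insert v F) hA' ?_ (Or.inr hk1')
          intro hne'
          obtain ⟨S', hS'⟩ := hne'
          have hsep' : IsSep G (A ∪ reachG G A Sstar ∪ {v}) B S' := Cfam_sepA hA' hS'
          have hnonempty : (Set.ncard '' {S : Set V |
              IsSep G (A ∪ reachG G A Sstar ∪ {v}) B S ∧ S ∩ insert v F = ∅}).Nonempty :=
            ⟨S'.ncard, S', ⟨hsep', hS'.2.2.1⟩, rfl⟩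
          obtain ⟨T, hT, hTc⟩ := Nat.sInf_mem hnonempty
          have hjump := node_jump hminstar hmax hv T hT.1 hT.2
          have hfr : flowRel G (A ∪ reachG G A Sstar ∪ {v}) B (insert v F) = T.ncard :=
            hTc.symm
          omega
        have hfin : (⋃ v ∈ Sstar.toFinite.toFinset,
            Cfam G A₀ B k (A ∪ reachG G A Sstar ∪ {v}) (insert v F)) =
            (⋃ v ∈ Sstar,
              Cfam G A₀ B k (A ∪ reachG G A Sstar ∪ {v}) (insert v F)) := by
          ext x
          simp [Set.Finite.mem_toFinset]
        have hsum : (⋃ v ∈ Sstar,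
              Cfam G A₀ B k (A ∪ reachG G A Sstar ∪ {v}) (insert v F)).ncard ≤
            lam * k ^ d := by
          rw [← hfin]
          refine le_trans (ncard_biUnion_le _ _) ?_
          have hcard : (Sstar.toFinite.toFinset).card = lam := by
            rw [← hstarc]
            exact (Set.ncard_eq_toFinset_card _ _).symm
          calc ∑ v ∈ Sstar.toFinite.toFinset,
                (Cfam G A₀ B k (A ∪ reachG G A Sstar ∪ {v}) (insert v F)).ncard
              ≤ ∑ _v ∈ Sstar.toFinite.toFinset, k ^ d :=
                Finset.sum_le_sum fun v hv => hterm v (Sstar.toFinite.mem_toFinset.mp hv)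
            _ = (Sstar.toFinite.toFinset).card * k ^ d := by
                rw [Finset.sum_const, smul_eq_mul]
            _ = lam * k ^ d := by rw [hcard]
        calc (Cfam G A₀ B k A F).ncard
            ≤ (insert Sstar (⋃ v ∈ Sstar,
                Cfam G A₀ B k (A ∪ reachG G A Sstar ∪ {v}) (insert v F))).ncard :=
              Set.ncard_le_ncard hgoalsub (Set.toFinite _)
          _ ≤ (⋃ v ∈ Sstar,
                Cfam G A₀ B k (A ∪ reachG G A Sstar ∪ {v}) (insert v F)).ncard + 1 :=
              Set.ncard_insert_le _ _
          _ ≤ lam * k ^ d + 1 := by omega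
          _ ≤ (lam + 1) * k ^ d := by
              have h1 : 0 < k ^ d := pow_pos (by omega) _
              have : (lam + 1) * k ^ d = lam * k ^ d + k ^ d := by ring
              omega
          _ ≤ k * k ^ d := Nat.mul_le_mul_right _ (by omega)
          _ = k ^ (d + 1) := by ring

end ImpSepProof
/-- For any `A, B ⊆ V(G)` and `k ≥ flow_G(A, B)`, the number of important `(A, B)`-separators
of size at most `k` is at most `k ^ (k - flow_G(A, B))`. -/
theorem important_separator_count {V : Type} [Fintype V]
    (G : SimpleGraph V) (A B : Set V) (k : ℕ) (hk : flowG G A B ≤ k) :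
    {S : Set V | IsImportantSep G A B S ∧ S.ncard ≤ k}.ncard
      ≤ k ^ (k - flowG G A B) := by
  classical
  have hset : {S : Set V | IsImportantSep G A B S ∧ S.ncard ≤ k} =
      ImpSepProof.Cfam G A B k A ∅ := by
    ext S
    simp [ImpSepProof.Cfam]
  rw [hset]
  refine ImpSepProof.main G A B k (k - flowG G A B) A ∅ Set.Subset.rfl ?_ ?_
  · intro _
    rw [ImpSepProof.flowRel_empty]
    omega
  · omega
end
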